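/- arXiv:2504.14842 — 9 statements merged into one kernel-verified Lean document; each statement's English description precedes it below -/
import Mathlib

section
/- Let R be a real number with 0 < R < 1. For each positive integer m, let n = 2^m and let r = r(m) be the least nonnegative integer such that \sum_{i=0}^{r} \binom{m}{i} \ge R \cdot 2^m. Then m - r(m) tends to infinity as m tends to infinity, and consequently 2^{m - r(m)} tends to infinity as m tends to infinity. -/
open Filter Finset

private lemma rm_aux_tail (m k : ℕ) (hkm : k ≤ m) :
    ∑ i ∈ Finset.Ico (m - k + 1) (m + 1), m.choose i ≤ k * (m + 1) ^ k := by
  calc ∑ i ∈ Finset.Ico (m - k + 1) (m + 1), m.choose i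
      ≤ ∑ _i ∈ Finset.Ico (m - k + 1) (m + 1), (m + 1) ^ k := by
        apply Finset.sum_le_sum
        intro i hi
        simp only [Finset.mem_Ico] at hi
        have hil : i ≤ m := by omega
        rw [← Nat.choose_symm hil]
        calc m.choose (m - i) ≤ m ^ (m - i) := Nat.choose_le_pow m (m - i)
          _ ≤ (m + 1) ^ (m - i) := Nat.pow_le_pow_left (by omega) _
          _ ≤ (m + 1) ^ k := Nat.pow_le_pow_right (by omega) (by omega)
    _ = k * (m + 1) ^ k := by
        rw [Finset.sum_const, Nat.card_Ico, smul_eq_mul]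
        congr 1
        omega

/-- Let `0 < R < 1`. For each positive integer `m`, let `n = 2^m` and let
`r m` be the least nonnegative integer such that `∑_{i=0}^{r} C(m,i) ≥ R * 2^m`.
Then `m - r m → ∞` and hence `2^(m - r m) → ∞` as `m → ∞`. -/
theorem rm_min_distance_tendsto_atTop
    (R : ℝ) (hR0 : 0 < R) (hR1 : R < 1) (r : ℕ → ℕ)
    (hr : ∀ m : ℕ, 0 < m →
      IsLeast {k : ℕ | R * 2 ^ m ≤ ∑ i ∈ Finset.range (k + 1), (m.choose i : ℝ)} (r m)) :
    Filter.Tendsto (fun m : ℕ => m - r m) Filter.atTop Filter.atTop ∧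
    Filter.Tendsto (fun m : ℕ => 2 ^ (m - r m)) Filter.atTop Filter.atTop := by
  have key : Tendsto (fun m : ℕ => m - r m) atTop atTop := by
    rw [tendsto_atTop]
    intro k
    have hc : (0:ℝ) < (1 - R) / (2 * (k + 1)) := by
      apply div_pos (by linarith) (by positivity)
    have hlo := isLittleO_pow_const_const_pow_of_one_lt (R := ℝ) k
      (by norm_num : (1:ℝ) < 2)
    have hev := Asymptotics.isLittleO_iff.mp hlo hc
    have hev' : ∀ᶠ m : ℕ in atTop, ((m:ℝ) + 1) ^ k ≤ (1 - R) / (k + 1) * 2 ^ m := by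
      have h2 := (tendsto_add_atTop_nat 1).eventually hev
      filter_upwards [h2] with m hm
      simp only [Real.norm_eq_abs] at hm
      rw [abs_of_nonneg (by positivity), abs_of_nonneg (by positivity)] at hm
      push_cast at hm
      calc ((m:ℝ) + 1) ^ k ≤ (1 - R) / (2 * (k + 1)) * 2 ^ (m + 1) := hm
        _ = (1 - R) / (k + 1) * 2 ^ m := by
            rw [pow_succ]
            field_simp
    filter_upwards [hev', eventually_ge_atTop k, eventually_ge_atTop 1]
      with m hpoly hkm hm1
    -- show m - k is in the set, hence r m ≤ m - k
    have hsum : ∑ i ∈ Finset.range (m + 1), (m.choose i : ℝ) = 2 ^ m := by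
      rw [← Nat.cast_sum, Nat.sum_range_choose]
      push_cast
      ring
    have hsplit : ∑ i ∈ Finset.range (m - k + 1), (m.choose i : ℝ) +
        ∑ i ∈ Finset.Ico (m - k + 1) (m + 1), (m.choose i : ℝ) =
        ∑ i ∈ Finset.range (m + 1), (m.choose i : ℝ) := by
      simp only [Finset.range_eq_Ico]
      exact Finset.sum_Ico_consecutive _ (by omega) (by omega)
    have htail : ∑ i ∈ Finset.Ico (m - k + 1) (m + 1), (m.choose i : ℝ) ≤
        (k : ℝ) * ((m : ℝ) + 1) ^ k := by
      have := rm_aux_tail m k hkm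
      calc ∑ i ∈ Finset.Ico (m - k + 1) (m + 1), (m.choose i : ℝ)
          = ((∑ i ∈ Finset.Ico (m - k + 1) (m + 1), m.choose i : ℕ) : ℝ) := by
            push_cast; ring
        _ ≤ ((k * (m + 1) ^ k : ℕ) : ℝ) := by exact_mod_cast this
        _ = (k : ℝ) * ((m : ℝ) + 1) ^ k := by push_cast; ring
    have htail2 : ∑ i ∈ Finset.Ico (m - k + 1) (m + 1), (m.choose i : ℝ) ≤
        (1 - R) * 2 ^ m := by
      calc ∑ i ∈ Finset.Ico (m - k + 1) (m + 1), (m.choose i : ℝ)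
          ≤ (k : ℝ) * ((m : ℝ) + 1) ^ k := htail
        _ ≤ (k : ℝ) * ((1 - R) / (k + 1) * 2 ^ m) := by
            apply mul_le_mul_of_nonneg_left hpoly (by positivity)
        _ ≤ (1 - R) * 2 ^ m := by
            rw [div_mul_eq_mul_div, mul_div_assoc']
            rw [div_le_iff₀ (by positivity)]
            have h2 : (0:ℝ) ≤ (1 - R) * 2 ^ m := by
              apply mul_nonneg (by linarith) (by positivity)
            nlinarith [h2]
    have hmem : R * 2 ^ m ≤ ∑ i ∈ Finset.range (m - k + 1), (m.choose i : ℝ) := by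
      have := hsplit
      rw [hsum] at this
      linarith
    have hle : r m ≤ m - k := (hr m hm1).2 hmem
    omega
  refine ⟨key, ?_⟩
  exact tendsto_atTop_mono (fun m => (Nat.lt_two_pow_self (n := m - r m)).le) key
end

section
/- Let m and r be integers with 0 \le r \le m. Over the field F_2 with two elements, consider the space of functions from (Fin m \to F_2) to F_2. For S \subseteq Fin m let e_S denote the monomial function v \mapsto \prod_{i \in S} v_i, and for an r-element subset S \subseteq Fin m and an assignment a : S \to F_2 let D_{S,a} denote the disjunctive-normal-form function v \mapsto \prod_{i \in S} (v_i + a_i + 1), i.e. the indicator function of the set {v : v_i = a_i for all i \in S}. Then the F_2-linear span of {e_S : S \subseteq Fin m, |S| \le r} equals the F_2-linear span of {D_{S,a} : S \subseteq Fin m, |S| = r, a : S \to F_2}. -/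
open Finset

lemma dnf_mem_monomial_span (m r : ℕ) (S : Finset (Fin m)) (a : Fin m → ZMod 2)
    (hS : S.card ≤ r) :
    (fun v : Fin m → ZMod 2 => ∏ i ∈ S, (v i + a i + 1)) ∈
      Submodule.span (ZMod 2)
        {f : (Fin m → ZMod 2) → ZMod 2 |
          ∃ S : Finset (Fin m), S.card ≤ r ∧ f = fun v => ∏ i ∈ S, v i} := by
  have hfun : (fun v : Fin m → ZMod 2 => ∏ i ∈ S, (v i + a i + 1)) =
      ∑ t ∈ S.powerset, (∏ i ∈ S \ t, (a i + 1)) •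
        (fun v : Fin m → ZMod 2 => ∏ i ∈ t, v i) := by
    funext v
    simp only [Finset.sum_apply, Pi.smul_apply, smul_eq_mul]
    have h1 : ∀ i ∈ S, v i + a i + 1 = v i + (a i + 1) := by intro i _; ring
    rw [Finset.prod_congr rfl h1, Finset.prod_add]
    exact Finset.sum_congr rfl fun t ht => by ring
  rw [hfun]
  refine Submodule.sum_mem _ fun t ht => Submodule.smul_mem _ _ (Submodule.subset_span ?_)
  exact ⟨t, le_trans (Finset.card_le_card (Finset.mem_powerset.mp ht)) hS, rfl⟩

lemma monomial_mem_dnf_span (m r : ℕ) (hr : r ≤ m) (S : Finset (Fin m)) (hS : S.card ≤ r) :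
    (fun v : Fin m → ZMod 2 => ∏ i ∈ S, v i) ∈
      Submodule.span (ZMod 2)
        {f : (Fin m → ZMod 2) → ZMod 2 |
          ∃ (T : Finset (Fin m)) (a : Fin m → ZMod 2), T.card = r ∧
            f = fun v => ∏ i ∈ T, (v i + a i + 1)} := by
  obtain ⟨T, hST, hT⟩ := Finset.exists_superset_card_eq hS (by simpa using hr)
  have key : (fun v : Fin m → ZMod 2 => ∏ i ∈ S, v i) =
      ∑ U ∈ (T \ S).powerset,
        (fun v : Fin m → ZMod 2 =>
          ∏ i ∈ T, (v i + (if i ∈ S ∪ U then (1:ZMod 2) else 0) + 1)) := by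
    funext v
    simp only [Finset.sum_apply]
    have hsplit : ∀ U ∈ (T \ S).powerset,
        (∏ i ∈ T, (v i + (if i ∈ S ∪ U then (1:ZMod 2) else 0) + 1)) =
        (∏ i ∈ U, v i) * (∏ i ∈ (T \ S) \ U, (v i + 1)) * (∏ i ∈ S, v i) := by
      intro U hU
      rw [Finset.mem_powerset] at hU
      rw [← Finset.prod_sdiff hST]
      congr 1
      · rw [← Finset.prod_sdiff hU]
        rw [mul_comm]
        congr 1
        · refine Finset.prod_congr rfl fun i hi => ?_
          have hiU : i ∈ U := hi
          have : i ∈ S ∪ U := Finset.mem_union_right _ hiU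
          simp [this]
          ring_nf
          rw [show (2:ZMod 2) = 0 by decide, zero_add]
        · refine Finset.prod_congr rfl fun i hi => ?_
          rw [Finset.mem_sdiff] at hi
          obtain ⟨hiTS, hiU⟩ := hi
          rw [Finset.mem_sdiff] at hiTS
          have : i ∉ S ∪ U := by simp [hiTS.2, hiU]
          simp [this]
      · refine Finset.prod_congr rfl fun i hi => ?_
        have : i ∈ S ∪ U := Finset.mem_union_left _ hi
        simp [this]
        ring_nf
        rw [show (2:ZMod 2) = 0 by decide, zero_add]
    rw [Finset.sum_congr rfl hsplit, ← Finset.sum_mul]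
    have : ∑ U ∈ (T \ S).powerset, (∏ i ∈ U, v i) * (∏ i ∈ (T \ S) \ U, (v i + 1)) = 1 := by
      rw [← Finset.prod_add]
      refine Finset.prod_eq_one fun i _ => ?_
      rw [show v i + (v i + 1) = (v i + v i) + 1 by ring, CharTwo.add_self_eq_zero, zero_add]
    rw [this, one_mul]
  rw [key]
  refine Submodule.sum_mem _ fun U hU => Submodule.subset_span ?_
  exact ⟨T, (fun i => if i ∈ S ∪ U then 1 else 0), hT, rfl⟩

/-- For `0 ≤ r ≤ m`, over `F₂`, the span of the monomial functions
`e_S(v) = ∏_{i ∈ S} v i` with `|S| ≤ r` equals the span of the disjunctive normal forms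
`D_{S,a}(v) = ∏_{i ∈ S} (v i + a i + 1)` with `|S| = r`. -/
theorem rm_span_monomials_eq_span_dnf (m r : ℕ) (hr : r ≤ m) :
    Submodule.span (ZMod 2)
      {f : (Fin m → ZMod 2) → ZMod 2 |
        ∃ S : Finset (Fin m), S.card ≤ r ∧ f = fun v => ∏ i ∈ S, v i} =
    Submodule.span (ZMod 2)
      {f : (Fin m → ZMod 2) → ZMod 2 |
        ∃ (S : Finset (Fin m)) (a : Fin m → ZMod 2), S.card = r ∧
          f = fun v => ∏ i ∈ S, (v i + a i + 1)} := by
  apply le_antisymm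
  · rw [Submodule.span_le]
    rintro f ⟨S, hS, rfl⟩
    exact monomial_mem_dnf_span m r hr S hS
  · rw [Submodule.span_le]
    rintro f ⟨S, a, hS, rfl⟩
    exact dnf_mem_monomial_span m r S a hS.le
end

section
/- Let m and r be integers with 0 \le r \le m, and let S \subseteq Fin m with |S| = t < r. Over F_2, the monomial function e_S : v \mapsto \prod_{i \in S} v_i (a function from (Fin m \to F_2) to F_2) lies in the F_2-linear span of the functions D_{T,a} : v \mapsto \prod_{i \in T} (v_i + a_i + 1), where T ranges over r-element subsets of Fin m and a ranges over assignments T \to F_2. -/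
/-- For `0 ≤ r ≤ m` and `S ⊆ Fin m` with `|S| = t < r`, the monomial
`e_S(v) = ∏_{i ∈ S} v i` lies in the `F₂`-span of the disjunctive normal forms
`D_{T,a}(v) = ∏_{i ∈ T} (v i + a i + 1)` with `|T| = r`. -/
theorem monomial_mem_span_dnf (m r t : ℕ) (hr : r ≤ m)
    (S : Finset (Fin m)) (hS : S.card = t) (htr : t < r) :
    (fun v : Fin m → ZMod 2 => ∏ i ∈ S, v i) ∈
      Submodule.span (ZMod 2)
        {f : (Fin m → ZMod 2) → ZMod 2 |
          ∃ (T : Finset (Fin m)) (a : Fin m → ZMod 2), T.card = r ∧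
            f = fun v => ∏ i ∈ T, (v i + a i + 1)} := by
  -- choose a superset T of S with card r
  obtain ⟨T, hST, hT⟩ : ∃ T, S ⊆ T ∧ T.card = r :=
    Finset.exists_superset_card_eq (by omega) (by simpa using hr)
  -- the set of admissible assignments
  set A : Finset (Fin m → ZMod 2) :=
    Finset.univ.filter (fun a => (∀ i ∈ S, a i = 1) ∧ (∀ i ∉ T, a i = 0)) with hA
  have key : (fun v : Fin m → ZMod 2 => ∏ i ∈ S, v i) =
      ∑ a ∈ A, (fun v => ∏ i ∈ T, (v i + a i + 1)) := by
    funext v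
    rw [Finset.sum_apply]
    set a₀ : Fin m → ZMod 2 := fun i => if i ∈ S then 1 else if i ∈ T then v i else 0 with ha₀
    have h1 : ∀ x : ZMod 2, x + x + 1 = 1 := by decide
    have h2 : ∀ x y : ZMod 2, x ≠ y → y + x + 1 = 0 := by decide
    rw [Finset.sum_eq_single a₀]
    · have : ∏ i ∈ T, (v i + a₀ i + 1) =
          (∏ i ∈ T \ S, (v i + a₀ i + 1)) * ∏ i ∈ S, (v i + a₀ i + 1) :=
        (Finset.prod_sdiff hST).symm
      rw [this]
      have hTS : ∏ i ∈ T \ S, (v i + a₀ i + 1) = 1 := by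
        apply Finset.prod_eq_one
        intro i hi
        rw [Finset.mem_sdiff] at hi
        simp only [ha₀, if_neg hi.2, if_pos hi.1]
        exact h1 (v i)
      have hSS : ∏ i ∈ S, (v i + a₀ i + 1) = ∏ i ∈ S, v i := by
        apply Finset.prod_congr rfl
        intro i hi
        simp only [ha₀, if_pos hi]
        rw [add_assoc, show (1:ZMod 2)+1=0 from rfl, add_zero]
      rw [hTS, hSS, one_mul]
    · intro a ha hne
      rw [hA, Finset.mem_filter] at ha
      obtain ⟨-, haS, haT⟩ := ha
      -- there is i ∈ T \ S with a i ≠ v i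
      have : ∃ i ∈ T, a i ≠ a₀ i := by
        by_contra h
        push_neg at h
        apply hne
        funext i
        by_cases hiT : i ∈ T
        · exact h i hiT
        · have hiS : i ∉ S := fun hiS => hiT (hST hiS)
          rw [haT i hiT]
          simp [ha₀, hiS, hiT]
      obtain ⟨i, hiT, hia⟩ := this
      apply Finset.prod_eq_zero hiT
      have hiS : i ∉ S := by
        intro hiS
        apply hia
        rw [haS i hiS]
        simp [ha₀, hiS]
      have : a i ≠ v i := by
        intro h
        apply hia
        rw [h]
        simp [ha₀, hiS, hiT]
      exact h2 _ _ this
    · intro h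
      exfalso
      apply h
      rw [hA, Finset.mem_filter]
      refine ⟨Finset.mem_univ _, fun i hi => by simp [ha₀, hi], fun i hi => ?_⟩
      have hiS : i ∉ S := fun hiS => hi (hST hiS)
      simp [ha₀, hiS, hi]
  rw [key]
  apply Submodule.sum_mem
  intro a _
  exact Submodule.subset_span ⟨T, a, hT, rfl⟩
end

section
/- Let m \ge 0 and 0 \le s \le m, and let f : (Fin m \to F_2) \to F_2 be a nonzero element of the F_2-linear span of the monomial functions e_S(v) = \prod_{i \in S} v_i over subsets S \subseteq Fin m with |S| \le s. Then |{v : f(v) = 1}| \ge 2^{m-s}. -/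
/-- For `0 ≤ s ≤ m`, every nonzero element of the span of the monomials
`e_S` with `|S| ≤ s` (i.e. every nonzero codeword of `RM(s, m)`) has Hamming weight at least
`2^(m-s)`. -/
theorem rm_min_distance (m s : ℕ) (hs : s ≤ m)
    (f : (Fin m → ZMod 2) → ZMod 2)
    (hf : f ∈ Submodule.span (ZMod 2)
      {g : (Fin m → ZMod 2) → ZMod 2 |
        ∃ S : Finset (Fin m), S.card ≤ s ∧ g = fun v => ∏ i ∈ S, v i})
    (hf0 : f ≠ 0) :
    2 ^ (m - s) ≤ (Finset.univ.filter fun v : Fin m → ZMod 2 => f v = 1).card := by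
  classical
  have hone : ∀ x : ZMod 2, x ≠ 0 → x = 1 := by decide
  have hzero : ∀ x : ZMod 2, x ≠ 1 → x = 0 := by decide
  -- Step 1: representation by a coefficient function
  obtain ⟨c, hcdeg, hcrep⟩ :
      ∃ c : Finset (Fin m) → ZMod 2, (∀ S, c S ≠ 0 → S.card ≤ s) ∧
        f = ∑ S : Finset (Fin m), c S • (fun v => ∏ i ∈ S, v i) := by
    clear hf0
    induction hf using Submodule.span_induction with
    | mem g hg =>
        obtain ⟨S, hS, rfl⟩ := hg
        refine ⟨fun T => if T = S then 1 else 0, ?_, ?_⟩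
        · intro T hT
          by_cases h : T = S
          · subst h; exact hS
          · simp [h] at hT
        · simp [ite_smul]
    | zero => exact ⟨0, by simp, by simp⟩
    | add x y hx hy ihx ihy =>
        obtain ⟨c1, h1, r1⟩ := ihx
        obtain ⟨c2, h2, r2⟩ := ihy
        refine ⟨c1 + c2, ?_, ?_⟩
        · intro S hS
          by_cases h : c1 S = 0
          · exact h2 S (by simpa [h] using hS)
          · exact h1 S h
        · rw [r1, r2, ← Finset.sum_add_distrib]
          refine Finset.sum_congr rfl fun S _ => ?_
          simp [add_smul]
    | smul r x hx ihx =>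
        obtain ⟨c1, h1, r1⟩ := ihx
        refine ⟨r • c1, ?_, ?_⟩
        · intro S hS
          exact h1 S (by intro h; simp [h] at hS)
        · rw [r1, Finset.smul_sum]
          refine Finset.sum_congr rfl fun S _ => ?_
          simp [smul_smul]
  -- the coefficient function is not identically zero
  have hc0 : ∃ S, c S ≠ 0 := by
    by_contra h
    push_neg at h
    exact hf0 (by rw [hcrep]; exact Finset.sum_eq_zero fun S _ => by simp [h S])
  -- Step 2: pick a monomial of maximal degree
  obtain ⟨S0, hS0mem, hS0max⟩ :=
    Finset.exists_max_image (Finset.univ.filter fun S => c S ≠ 0) Finset.card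
      ⟨hc0.choose, by simp [hc0.choose_spec]⟩
  have hcS0 : c S0 ≠ 0 := (Finset.mem_filter.mp hS0mem).2
  have hdle : S0.card ≤ s := hcdeg S0 hcS0
  -- Step 3: key computation — the sum of f over each S0-subcube coset is 1
  have key : ∀ w : Fin m → ZMod 2,
      ∑ v ∈ Fintype.piFinset
        (fun i => if i ∈ S0 then (Finset.univ : Finset (ZMod 2)) else {w i}), f v = 1 := by
    intro w
    have expand : ∀ S : Finset (Fin m),
        ∑ v ∈ Fintype.piFinset
            (fun i => if i ∈ S0 then (Finset.univ : Finset (ZMod 2)) else {w i}),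
          ∏ i ∈ S, v i
        = ∏ i : Fin m, ∑ x ∈ (if i ∈ S0 then (Finset.univ : Finset (ZMod 2)) else {w i}),
            (if i ∈ S then x else 1) := by
      intro S
      rw [Finset.prod_univ_sum]
      refine Finset.sum_congr rfl fun v _ => ?_
      rw [Finset.prod_ite_mem, Finset.univ_inter]
    have hterm : ∀ S : Finset (Fin m), c S ≠ 0 → S ≠ S0 →
        (∑ v ∈ Fintype.piFinset
            (fun i => if i ∈ S0 then (Finset.univ : Finset (ZMod 2)) else {w i}),
          ∏ i ∈ S, v i) = 0 := by
      intro S hcS hne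
      rw [expand S]
      have hnsub : ¬ S0 ⊆ S := by
        intro hsub
        exact hne (Finset.eq_of_subset_of_card_le hsub
          (hS0max S (Finset.mem_filter.mpr ⟨Finset.mem_univ S, hcS⟩))).symm
      obtain ⟨i0, hi0S0, hi0S⟩ := Finset.not_subset.mp hnsub
      refine Finset.prod_eq_zero (Finset.mem_univ i0) ?_
      simp only [if_pos hi0S0, if_neg hi0S]
      decide
    have htop :
        (∑ v ∈ Fintype.piFinset
            (fun i => if i ∈ S0 then (Finset.univ : Finset (ZMod 2)) else {w i}),
          ∏ i ∈ S0, v i) = 1 := by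
      rw [expand S0]
      refine Finset.prod_eq_one fun i _ => ?_
      by_cases h : i ∈ S0
      · simp only [if_pos h]
        decide
      · simp [h]
    calc ∑ v ∈ Fintype.piFinset
            (fun i => if i ∈ S0 then (Finset.univ : Finset (ZMod 2)) else {w i}), f v
        = ∑ S : Finset (Fin m), c S •
            ∑ v ∈ Fintype.piFinset
              (fun i => if i ∈ S0 then (Finset.univ : Finset (ZMod 2)) else {w i}),
              ∏ i ∈ S, v i := by
          rw [hcrep]
          simp only [Finset.sum_apply, Pi.smul_apply, smul_eq_mul]
          rw [Finset.sum_comm]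
          exact Finset.sum_congr rfl fun S _ => by rw [Finset.mul_sum]
      _ = 1 := by
          rw [Finset.sum_eq_single S0]
          · rw [htop, smul_eq_mul, mul_one, hone _ hcS0]
          · intro S _ hne
            by_cases h : c S = 0
            · simp [h]
            · rw [hterm S h hne, smul_zero]
          · intro h; exact absurd (Finset.mem_univ S0) h
  -- Step 4: each coset of the S0-subcube contains a point where f = 1
  have exv : ∀ w : Fin m → ZMod 2, ∃ v ∈ Fintype.piFinset
      (fun i => if i ∈ S0 then (Finset.univ : Finset (ZMod 2)) else {w i}), f v = 1 := by
    intro w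
    by_contra h
    push_neg at h
    have h0 : ∑ v ∈ Fintype.piFinset
        (fun i => if i ∈ S0 then (Finset.univ : Finset (ZMod 2)) else {w i}), f v = 0 :=
      Finset.sum_eq_zero fun v hv => hzero _ (h v hv)
    rw [key w] at h0
    exact one_ne_zero h0
  -- Step 5: counting via a surjection onto assignments vanishing on S0
  set t := Fintype.piFinset
    (fun i : Fin m => if i ∈ S0 then ({0} : Finset (ZMod 2)) else Finset.univ) with ht
  have hsurj : Set.SurjOn (fun (v : Fin m → ZMod 2) (i : Fin m) =>
        if i ∈ S0 then (0 : ZMod 2) else v i)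
      ↑(Finset.univ.filter fun v : Fin m → ZMod 2 => f v = 1) ↑t := by
    intro w hw
    simp only [ht, Finset.mem_coe, Fintype.mem_piFinset] at hw
    obtain ⟨v, hv, hfv⟩ := exv w
    refine ⟨v, by simp [hfv], ?_⟩
    funext i
    by_cases h : i ∈ S0
    · have := hw i
      simp only [if_pos h, Finset.mem_singleton] at this ⊢
      exact this.symm
    · simp only [if_neg h]
      have := (Fintype.mem_piFinset.mp hv) i
      simp only [if_neg h, Finset.mem_singleton] at this
      exact this
  have hcard1 : t.card = 2 ^ (m - S0.card) := by
    have h1 : ∀ i : Fin m,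
        ((if i ∈ S0 then ({0} : Finset (ZMod 2)) else Finset.univ).card)
          = if i ∈ S0 then 1 else 2 := by
      intro i; by_cases h : i ∈ S0 <;> simp [h]
    have h2 : (Finset.univ.filter fun i : Fin m => ¬ i ∈ S0) = S0ᶜ := by
      ext i; simp
    rw [ht, Fintype.card_piFinset]
    simp_rw [h1]
    rw [Finset.prod_ite, Finset.prod_const, Finset.prod_const, one_pow, one_mul, h2,
      Finset.card_compl, Fintype.card_fin]
  calc 2 ^ (m - s) ≤ 2 ^ (m - S0.card) :=
        Nat.pow_le_pow_right (by norm_num) (Nat.sub_le_sub_left hdle m)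
    _ = t.card := hcard1.symm
    _ ≤ (Finset.univ.filter fun v : Fin m → ZMod 2 => f v = 1).card :=
        Finset.card_le_card_of_surjOn _ hsurj
end

section
/- Let m \ge 1 and 0 \le s \le m - 1, and let f : (Fin m \to F_2) \to F_2 be an element of the F_2-linear span of the monomial functions e_S(v) = \prod_{i \in S} v_i over subsets S \subseteq Fin m with |S| \le s, such that f is neither the zero function nor the constant-one function. Then the Hamming weight w = |{v : f(v) = 1}| is even and satisfies 2^{m-s} \le w \le 2^m - 2^{m-s}. -/
open Finset

namespace RM

def wt {n : ℕ} (f : (Fin n → ZMod 2) → ZMod 2) : ℕ :=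
  (Finset.univ.filter fun v => f v = 1).card

def Gens (n s : ℕ) : Set ((Fin n → ZMod 2) → ZMod 2) :=
  {g | ∃ S : Finset (Fin n), S.card ≤ s ∧ g = fun v => ∏ i ∈ S, v i}

variable {n s : ℕ}

/-- the finset of "succ-indices" of S -/
noncomputable def tl (S : Finset (Fin (n+1))) : Finset (Fin n) :=
  (S.erase 0).preimage Fin.succ ((Fin.succ_injective n).injOn)

lemma map_tl (S : Finset (Fin (n+1))) : (tl S).map (Fin.succEmb n) = S.erase 0 := by
  ext i
  simp only [tl, Finset.mem_map, Finset.mem_preimage, Fin.succEmb]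
  constructor
  · rintro ⟨j, hj, rfl⟩; exact hj
  · intro hi
    rcases Fin.eq_zero_or_eq_succ i with rfl | ⟨j, rfl⟩
    · simp at hi
    · exact ⟨j, hi, rfl⟩

lemma card_tl (S : Finset (Fin (n+1))) : (tl S).card = (S.erase 0).card := by
  rw [← map_tl S, Finset.card_map]

lemma prod_cons (S : Finset (Fin (n+1))) (x : ZMod 2) (w : Fin n → ZMod 2) :
    (∏ i ∈ S, (Fin.cons x w : Fin (n+1) → ZMod 2) i) =
      (if (0 : Fin (n+1)) ∈ S then x else 1) * ∏ j ∈ tl S, w j := by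
  have h2 : ∏ j ∈ tl S, w j = ∏ i ∈ S.erase 0, (Fin.cons x w : Fin (n+1) → ZMod 2) i := by
    rw [← map_tl S, Finset.prod_map]
    simp [Fin.succEmb]
  by_cases h0 : (0 : Fin (n+1)) ∈ S
  · rw [if_pos h0, h2, ← Finset.prod_erase_mul S _ h0]
    simp [mul_comm]
  · rw [if_neg h0, h2, one_mul, Finset.erase_eq_of_notMem h0]

end RM

namespace RM2

lemma two_cases : ∀ a : ZMod 2, a = 0 ∨ a = 1 := by decide

-- weight split
lemma wt_split {n : ℕ} (f : (Fin (n+1) → ZMod 2) → ZMod 2) :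
    (Finset.univ.filter fun v => f v = 1).card =
      (Finset.univ.filter fun w : Fin n → ZMod 2 => f (Fin.cons 0 w) = 1).card +
      (Finset.univ.filter fun w : Fin n → ZMod 2 => f (Fin.cons 1 w) = 1).card := by
  rw [Finset.card_filter, Finset.card_filter, Finset.card_filter,
    ← Equiv.sum_comp (Fin.consEquiv (fun _ : Fin (n+1) => ZMod 2)) (fun v => if f v = 1 then 1 else 0)]
  rw [Fintype.sum_prod_type]
  rw [show (Finset.univ : Finset (ZMod 2)) = {0, 1} by decide, Finset.sum_insert (by decide),
    Finset.sum_singleton]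
  rfl

-- triangle
lemma wt_triangle {n : ℕ} (g h : (Fin n → ZMod 2) → ZMod 2) :
    (Finset.univ.filter fun w : Fin n → ZMod 2 => h w = 1).card ≤
      (Finset.univ.filter fun w : Fin n → ZMod 2 => g w = 1).card +
      (Finset.univ.filter fun w : Fin n → ZMod 2 => g w + h w = 1).card := by
  rw [Finset.card_filter, Finset.card_filter, Finset.card_filter, ← Finset.sum_add_distrib]
  apply Finset.sum_le_sum
  intro w _
  have key : ∀ a b : ZMod 2,
      (if b = 1 then 1 else 0) ≤ (if a = 1 then (1:ℕ) else 0) + (if a + b = 1 then 1 else 0) := by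
    decide
  exact key (g w) (h w)

end RM2

namespace RM
open RM2

noncomputable def Lx {n : ℕ} (x : ZMod 2) :
    ((Fin (n+1) → ZMod 2) → ZMod 2) →ₗ[ZMod 2] ((Fin n → ZMod 2) → ZMod 2) :=
  LinearMap.funLeft (ZMod 2) (ZMod 2) (fun w => Fin.cons x w)

lemma Lx_apply {n : ℕ} (x : ZMod 2) (f : (Fin (n+1) → ZMod 2) → ZMod 2) (w : Fin n → ZMod 2) :
    Lx x f w = f (Fin.cons x w) := rfl

lemma L0_mem {n s : ℕ} (f : (Fin (n+1) → ZMod 2) → ZMod 2)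
    (hf : f ∈ Submodule.span (ZMod 2) (Gens (n+1) s)) :
    Lx 0 f ∈ Submodule.span (ZMod 2) (Gens n s) := by
  have h1 : Submodule.map (Lx (n := n) 0) (Submodule.span (ZMod 2) (Gens (n+1) s)) ≤
      Submodule.span (ZMod 2) (Gens n s) := by
    rw [Submodule.map_span, Submodule.span_le]
    rintro _ ⟨g, ⟨S, hS, rfl⟩, rfl⟩
    by_cases h0 : (0 : Fin (n+1)) ∈ S
    · have : Lx (n := n) 0 (fun v => ∏ i ∈ S, v i) = 0 := by
        funext w; rw [Lx_apply, prod_cons, if_pos h0]; simp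
      rw [this]; exact Submodule.zero_mem _
    · have : Lx (n := n) 0 (fun v => ∏ i ∈ S, v i) = fun w => ∏ j ∈ tl S, w j := by
        funext w; rw [Lx_apply, prod_cons, if_neg h0, one_mul]
      rw [this]
      apply Submodule.subset_span
      exact ⟨tl S, by rw [card_tl, Finset.erase_eq_of_notMem h0]; exact hS, rfl⟩
  exact h1 ⟨f, hf, rfl⟩

noncomputable def LH {n : ℕ} :
    ((Fin (n+1) → ZMod 2) → ZMod 2) →ₗ[ZMod 2] ((Fin n → ZMod 2) → ZMod 2) :=
  Lx 0 + Lx 1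

lemma LH_apply {n : ℕ} (f : (Fin (n+1) → ZMod 2) → ZMod 2) (w : Fin n → ZMod 2) :
    LH f w = f (Fin.cons 0 w) + f (Fin.cons 1 w) := rfl

lemma Lh_mem {n s : ℕ} (f : (Fin (n+1) → ZMod 2) → ZMod 2)
    (hf : f ∈ Submodule.span (ZMod 2) (Gens (n+1) (s+1))) :
    (LH (n := n)) f ∈ Submodule.span (ZMod 2) (Gens n s) := by
  have h1 : Submodule.map (LH (n := n)) (Submodule.span (ZMod 2) (Gens (n+1) (s+1))) ≤
      Submodule.span (ZMod 2) (Gens n s) := by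
    rw [Submodule.map_span, Submodule.span_le]
    rintro _ ⟨g, ⟨S, hS, rfl⟩, rfl⟩
    by_cases h0 : (0 : Fin (n+1)) ∈ S
    · have : (LH (n := n)) (fun v => ∏ i ∈ S, v i) = fun w => ∏ j ∈ tl S, w j := by
        funext w
        simp only [LH_apply, prod_cons, if_pos h0]
        ring
      rw [this]
      apply Submodule.subset_span
      refine ⟨tl S, ?_, rfl⟩
      have hc : (tl S).card + 1 = S.card := by
        rw [card_tl]
        exact Finset.card_erase_add_one h0
      omega
    · have : (LH (n := n)) (fun v => ∏ i ∈ S, v i) = 0 := by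
        funext w
        simp only [LH_apply, prod_cons, if_neg h0, one_mul, Pi.zero_apply]
        rw [← two_mul, show ((2:ZMod 2)) = 0 by decide, zero_mul]
      rw [this]; exact Submodule.zero_mem _
  exact h1 ⟨f, hf, rfl⟩

end RM

namespace RM
open RM2

lemma gens_zero (n : ℕ) : Gens n 0 = {fun _ => (1 : ZMod 2)} := by
  ext g
  constructor
  · rintro ⟨S, hS, rfl⟩
    have : S = ∅ := Finset.card_eq_zero.mp (Nat.le_zero.mp hS)
    subst this; simp
  · rintro rfl
    exact ⟨∅, by simp, by simp⟩

lemma wt_lower : ∀ (n s : ℕ) (f : (Fin n → ZMod 2) → ZMod 2),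
    f ∈ Submodule.span (ZMod 2) (Gens n s) → f ≠ 0 →
    2 ^ (n - s) ≤ (Finset.univ.filter fun v => f v = 1).card := by
  intro n
  induction n with
  | zero =>
    intro s f _ hf0
    simp only [Nat.zero_sub, pow_zero]
    apply Finset.card_pos.mpr
    have : ∃ v, f v ≠ 0 := by
      by_contra hc
      push_neg at hc
      exact hf0 (funext hc)
    obtain ⟨v, hv⟩ := this
    rcases two_cases (f v) with h | h
    · exact absurd h hv
    · exact ⟨v, Finset.mem_filter.mpr ⟨Finset.mem_univ v, h⟩⟩
  | succ n ih =>
    intro s f hf hf0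
    match s with
    | 0 =>
      rw [gens_zero] at hf
      rcases Submodule.mem_span_singleton.mp hf with ⟨a, ha⟩
      rcases two_cases a with rfl | rfl
      · exfalso; apply hf0; rw [← ha]; simp
      · rw [one_smul] at ha
        subst ha
        have : (Finset.univ.filter fun v : Fin (n+1) → ZMod 2 => (1:ZMod 2) = 1) =
            Finset.univ := by simp
        rw [this, Finset.card_univ, Fintype.card_fun, ZMod.card, Fintype.card_fin]
        exact Nat.pow_le_pow_right (by norm_num) (by omega)
    | s + 1 =>
      set g0 := Lx (n := n) 0 f with hg0def
      set h := LH (n := n) f with hhdef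
      have hg0 : g0 ∈ Submodule.span (ZMod 2) (Gens n (s+1)) := L0_mem f hf
      have hh : h ∈ Submodule.span (ZMod 2) (Gens n s) := Lh_mem f hf
      have hsplit := wt_split f
      by_cases hzero : h = 0
      -- case h = 0
      · have heq : ∀ w, f (Fin.cons 1 w) = f (Fin.cons 0 w) := by
          intro w
          have hthis : f (Fin.cons 0 w) + f (Fin.cons 1 w) = 0 := congrFun hzero w
          have h2 : ∀ a b : ZMod 2, a + b = 0 → b = a := by decide
          exact h2 _ _ hthis
        have hg0ne : g0 ≠ 0 := by
          intro hg0z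
          apply hf0
          funext v
          have hv : f v = f (Fin.cons (v 0) (Fin.tail v)) := by rw [Fin.cons_self_tail]
          rcases two_cases (v 0) with h0 | h0 <;> rw [hv, h0]
          · exact congrFun hg0z (Fin.tail v)
          · rw [heq]; exact congrFun hg0z (Fin.tail v)
        have hwg := ih (s+1) g0 hg0 hg0ne
        have hfilter : (Finset.univ.filter fun w : Fin n → ZMod 2 => f (Fin.cons 1 w) = 1) =
            (Finset.univ.filter fun w : Fin n → ZMod 2 => f (Fin.cons 0 w) = 1) := by
          apply Finset.filter_congr; intro w _; rw [heq]
        rw [hsplit, hfilter]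
        have hexp : n + 1 - (s + 1) ≤ (n - (s+1)) + 1 := by omega
        calc 2 ^ (n + 1 - (s+1)) ≤ 2 ^ ((n - (s+1)) + 1) :=
              Nat.pow_le_pow_right (by norm_num) hexp
          _ = 2 ^ (n - (s+1)) + 2 ^ (n - (s+1)) := by ring
          _ ≤ _ := by
              have : (Finset.univ.filter fun w : Fin n → ZMod 2 => f (Fin.cons 0 w) = 1).card =
                  (Finset.univ.filter fun w : Fin n → ZMod 2 => g0 w = 1).card := rfl
              omega
      -- case h ≠ 0
      · have hwh := ih s h hh hzero
        have htri : (Finset.univ.filter fun w : Fin n → ZMod 2 => h w = 1).card ≤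
            (Finset.univ.filter fun w : Fin n → ZMod 2 => f (Fin.cons 0 w) = 1).card +
            (Finset.univ.filter fun w : Fin n → ZMod 2 => f (Fin.cons 1 w) = 1).card := by
          have := wt_triangle (fun w => f (Fin.cons 0 w)) h
          have hfe : (Finset.univ.filter
              fun w : Fin n → ZMod 2 => f (Fin.cons 0 w) + h w = 1) =
              (Finset.univ.filter fun w : Fin n → ZMod 2 => f (Fin.cons 1 w) = 1) := by
            apply Finset.filter_congr; intro w _
            rw [hhdef, LH_apply]
            constructor
            · intro hx
              have h3 : ∀ a b : ZMod 2, a + (a + b) = 1 → b = 1 := by decide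
              exact h3 _ _ hx
            · intro hx
              have h3 : ∀ a b : ZMod 2, b = 1 → a + (a + b) = 1 := by decide
              exact h3 _ _ hx
          rwa [hfe] at this
        rw [hsplit]
        have : n + 1 - (s + 1) = n - s := by omega
        rw [this]
        omega

end RM

namespace RM
open RM2

lemma sum_eval_zero {m s : ℕ} (hm : 1 ≤ m) (hs : s ≤ m - 1)
    (f : (Fin m → ZMod 2) → ZMod 2) (hf : f ∈ Submodule.span (ZMod 2) (Gens m s)) :
    ∑ v : Fin m → ZMod 2, f v = 0 := by
  induction hf using Submodule.span_induction with
  | mem g hg =>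
    obtain ⟨S, hS, rfl⟩ := hg
    have hlt : S.card < m := by omega
    have : ∃ j : Fin m, j ∉ S := by
      by_contra hc
      push_neg at hc
      have : S = Finset.univ := Finset.eq_univ_iff_forall.mpr hc
      rw [this, Finset.card_univ, Fintype.card_fin] at hlt
      omega
    obtain ⟨j, hj⟩ := this
    refine Finset.sum_involution (fun v _ => Function.update v j (v j + 1)) ?_ ?_
      (fun v _ => Finset.mem_univ _) ?_
    · intro v _
      have : (∏ i ∈ S, Function.update v j (v j + 1) i) = ∏ i ∈ S, v i := by
        apply Finset.prod_congr rfl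
        intro i hi
        exact Function.update_of_ne (by rintro rfl; exact hj hi) _ _
      rw [this, ← two_mul, show ((2:ZMod 2)) = 0 by decide, zero_mul]
    · intro v hv hne hcon
      have hj2 : Function.update v j (v j + 1) j = v j := congrFun hcon j
      rw [Function.update_self] at hj2
      exact (by decide : ∀ a : ZMod 2, a + 1 ≠ a) (v j) hj2
    · intro v _
      funext i
      by_cases hi : i = j
      · subst hi
        simp [Function.update_self]
        have h2 : ∀ a : ZMod 2, a + 1 + 1 = a := by decide
        exact h2 _
      · simp [Function.update_of_ne hi]
  | zero => simp
  | add x y _ _ hx hy =>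
    simp only [Pi.add_apply]
    rw [Finset.sum_add_distrib, hx, hy, add_zero]
  | smul a x _ hx => simp only [Pi.smul_apply, smul_eq_mul, ← Finset.mul_sum, hx, mul_zero]

lemma sum_eval_eq_card {m : ℕ} (f : (Fin m → ZMod 2) → ZMod 2) :
    ∑ v : Fin m → ZMod 2, f v =
      ((Finset.univ.filter fun v => f v = 1).card : ZMod 2) := by
  rw [← Finset.sum_filter_add_sum_filter_not Finset.univ (fun v => f v = 1) f]
  have h1 : ∑ v ∈ Finset.univ.filter (fun v => f v = 1), f v =
      ((Finset.univ.filter fun v => f v = 1).card : ZMod 2) := by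
    rw [Finset.sum_congr rfl (fun v hv => (Finset.mem_filter.mp hv).2)]
    simp [Finset.sum_const]
  have h2 : ∑ v ∈ Finset.univ.filter (fun v => ¬ f v = 1), f v = 0 := by
    apply Finset.sum_eq_zero
    intro v hv
    rcases two_cases (f v) with h | h
    · exact h
    · exact absurd h (Finset.mem_filter.mp hv).2
  rw [h1, h2, add_zero]

end RM


/-- For `m ≥ 1` and `0 ≤ s ≤ m - 1`, every codeword of `RM(s, m)` other than
the zero function and the constant-one function has even Hamming weight `w` with
`2^(m-s) ≤ w ≤ 2^m - 2^(m-s)`. -/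
theorem rm_weight_of_nontrivial_codeword (m s : ℕ) (hm : 1 ≤ m) (hs : s ≤ m - 1)
    (f : (Fin m → ZMod 2) → ZMod 2)
    (hf : f ∈ Submodule.span (ZMod 2)
      {g : (Fin m → ZMod 2) → ZMod 2 |
        ∃ S : Finset (Fin m), S.card ≤ s ∧ g = fun v => ∏ i ∈ S, v i})
    (hf0 : f ≠ 0) (hf1 : f ≠ fun _ => 1) :
    Even (Finset.univ.filter fun v : Fin m → ZMod 2 => f v = 1).card ∧
    2 ^ (m - s) ≤ (Finset.univ.filter fun v : Fin m → ZMod 2 => f v = 1).card ∧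
    (Finset.univ.filter fun v : Fin m → ZMod 2 => f v = 1).card ≤ 2 ^ m - 2 ^ (m - s) := by
  have hf' : f ∈ Submodule.span (ZMod 2) (RM.Gens m s) := hf
  refine ⟨?_, RM.wt_lower m s f hf' hf0, ?_⟩
  · have h1 := RM.sum_eval_zero hm hs f hf'
    rw [RM.sum_eval_eq_card] at h1
    rw [even_iff_two_dvd]
    exact (ZMod.natCast_eq_zero_iff _ 2).mp h1
  · -- upper bound via f + 1
    set f1 : (Fin m → ZMod 2) → ZMod 2 := f + (fun _ => 1) with hf1def
    have hone : (fun _ => (1 : ZMod 2)) ∈ Submodule.span (ZMod 2) (RM.Gens m s) :=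
      Submodule.subset_span ⟨∅, by simp, by simp⟩
    have hf1mem : f1 ∈ Submodule.span (ZMod 2) (RM.Gens m s) :=
      Submodule.add_mem _ hf' hone
    have hf1ne : f1 ≠ 0 := by
      intro hc
      apply hf1
      funext v
      have := congrFun hc v
      have h3 : ∀ a : ZMod 2, a + 1 = 0 → a = 1 := by decide
      exact h3 _ this
    have hlow1 := RM.wt_lower m s f1 hf1mem hf1ne
    have hfe : (Finset.univ.filter fun v : Fin m → ZMod 2 => f1 v = 1) =
        (Finset.univ.filter fun v : Fin m → ZMod 2 => ¬ f v = 1) := by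
      apply Finset.filter_congr
      intro v _
      have h4 : ∀ a : ZMod 2, (a + 1 = 1 ↔ ¬ a = 1) := by decide
      exact h4 (f v)
    rw [hfe] at hlow1
    have hcard := Finset.card_filter_add_card_filter_not
      (s := (Finset.univ : Finset (Fin m → ZMod 2))) (fun v => f v = 1)
    rw [Finset.card_univ, Fintype.card_fun, ZMod.card, Fintype.card_fin] at hcard
    omega
end

section
/- Let M \ge 1 and 0 \le w \le 2M be integers, and fix a subset A of a 2M-element set X with |A| = M. Let N denote the number of w-element subsets S \subseteq X such that |S \cap A| is even. If w is even then 2N = \binom{2M}{w} + (-1)^{w/2} \binom{M}{w/2}, and if w is odd then 2N = \binom{2M}{w}. -/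
open Finset Polynomial

private lemma coeff_one_sub_X_pow' (M k : ℕ) :
    ((1 - X : ℤ[X]) ^ M).coeff k = (-1) ^ k * (M.choose k : ℤ) := by
  have h : (1 - X : ℤ[X]) = C (-1) * (X + C (-1)) := by
    simp [mul_add]; ring
  rw [h, mul_pow, ← C_pow, coeff_C_mul, coeff_X_add_C_pow]
  rcases le_or_gt k M with hk | hk
  · have : (-1 : ℤ) ^ M * (-1) ^ (M - k) = (-1) ^ k := by
      rw [← pow_add]
      have : M + (M - k) = 2 * (M - k) + k := by omega
      rw [this, pow_add, pow_mul]
      norm_num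
    rw [← mul_assoc, this]
  · rw [Nat.choose_eq_zero_of_lt hk]
    simp

private lemma coeff_one_sub_X_sq_pow' (M w : ℕ) (hw : w ≤ 2 * M) :
    ((1 - X ^ 2 : ℤ[X]) ^ M).coeff w =
      if Even w then (-1) ^ (w / 2) * (M.choose (w / 2) : ℤ) else 0 := by
  have h : (1 - X ^ 2 : ℤ[X]) ^ M
      = ∑ j ∈ range (M + 1), C ((-1 : ℤ) ^ j * M.choose j) * X ^ (2 * j) := by
    rw [sub_eq_add_neg, add_comm, add_pow]
    refine Finset.sum_congr rfl fun j hj => ?_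
    rw [one_pow, mul_one, neg_pow, ← pow_mul, C_mul, C_pow, map_neg, C_1, C_eq_natCast]
    ring
  rw [h, finset_sum_coeff]
  simp only [coeff_C_mul, coeff_X_pow]
  by_cases hev : Even w
  · have hev' := hev
    obtain ⟨m, hm⟩ := hev'
    have hw2 : w / 2 = m := by omega
    rw [if_pos hev, hw2, Finset.sum_eq_single m]
    · rw [if_pos (by omega), mul_one]
    · intro j _ hj
      rw [if_neg (by omega), mul_zero]
    · intro hm'
      simp only [Finset.mem_range, not_lt] at hm'
      omega
  · rw [if_neg hev]
    refine Finset.sum_eq_zero fun j _ => ?_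
    rw [if_neg (fun h => hev ⟨j, by omega⟩), mul_zero]

private lemma alt_vandermonde' (M w : ℕ) (hw : w ≤ 2 * M) :
    ∑ k ∈ range (w + 1), (-1 : ℤ) ^ k * (M.choose k : ℤ) * (M.choose (w - k) : ℤ) =
      if Even w then (-1) ^ (w / 2) * (M.choose (w / 2) : ℤ) else 0 := by
  have key : ((1 - X : ℤ[X]) ^ M * (1 + X) ^ M).coeff w =
      ((1 - X ^ 2 : ℤ[X]) ^ M).coeff w := by
    rw [← mul_pow]
    congr 2
    ring
  rw [coeff_mul, Finset.Nat.sum_antidiagonal_eq_sum_range_succ_mk] at key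
  simp only [coeff_one_sub_X_pow', coeff_one_add_X_pow] at key
  rw [coeff_one_sub_X_sq_pow' M w hw] at key
  rw [← key]

private lemma fiber_count' (M w k : ℕ) (hk : k ≤ w)
    (X : Type) [Fintype X] [DecidableEq X] (hX : Fintype.card X = 2 * M)
    (A : Finset X) (hA : A.card = M) :
    ((Finset.powersetCard w (Finset.univ : Finset X)).filter
      fun S => (S ∩ A).card = k).card = M.choose k * M.choose (w - k) := by
  have hAc : Aᶜ.card = M := by
    rw [Finset.card_compl, hA, hX]; omega
  have := Finset.card_bij'
    (s := (Finset.powersetCard w (Finset.univ : Finset X)).filter fun S => (S ∩ A).card = k)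
    (t := (A.powersetCard k) ×ˢ (Aᶜ.powersetCard (w - k)))
    (i := fun S _ => (S ∩ A, S \ A)) (j := fun p _ => p.1 ∪ p.2)
    ?_ ?_ ?_ ?_
  · rw [this, Finset.card_product, Finset.card_powersetCard, Finset.card_powersetCard, hA, hAc]
  · rintro S hS
    simp only [Finset.mem_filter, Finset.mem_powersetCard] at hS
    obtain ⟨⟨-, hcard⟩, hkeq⟩ := hS
    simp only [Finset.mem_product, Finset.mem_powersetCard]
    refine ⟨⟨Finset.inter_subset_right, hkeq⟩, ?_, ?_⟩
    · intro x hx; simp only [Finset.mem_sdiff] at hx; simp [hx.2]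
    · have : (S \ A).card = S.card - (S ∩ A).card := by
        rw [Finset.card_sdiff_add_card_inter S A |>.symm] at hcard ⊢
        omega
      rw [this, hcard, hkeq]
  · rintro ⟨T, U⟩ hp
    simp only [Finset.mem_product, Finset.mem_powersetCard] at hp
    obtain ⟨⟨hTA, hT⟩, hUA, hU⟩ := hp
    have hdisj : Disjoint T U := by
      refine Finset.disjoint_left.2 fun x hxT hxU => ?_
      exact (Finset.mem_compl.1 (hUA hxU)) (hTA hxT)
    simp only [Finset.mem_filter, Finset.mem_powersetCard]
    refine ⟨⟨Finset.subset_univ _, ?_⟩, ?_⟩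
    · rw [Finset.card_union_of_disjoint hdisj, hT, hU]; omega
    · have hUa : U ∩ A = ∅ := by
        refine Finset.eq_empty_of_forall_notMem fun x hx => ?_
        simp only [Finset.mem_inter] at hx
        exact (Finset.mem_compl.1 (hUA hx.1)) hx.2
      rw [Finset.union_inter_distrib_right, hUa, Finset.union_empty,
        Finset.inter_eq_left.2 hTA, hT]
  · rintro S hS
    show S ∩ A ∪ S \ A = S
    rw [Finset.union_comm, Finset.sdiff_union_inter]
  · rintro ⟨T, U⟩ hp
    simp only [Finset.mem_product, Finset.mem_powersetCard] at hp
    obtain ⟨⟨hTA, hT⟩, hUA, hU⟩ := hp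
    have hUa : ∀ x ∈ U, x ∉ A := fun x hx => Finset.mem_compl.1 (hUA hx)
    have h1 : (T ∪ U) ∩ A = T := by
      ext x
      simp only [Finset.mem_inter, Finset.mem_union]
      constructor
      · rintro ⟨hx | hx, hxA⟩
        · exact hx
        · exact absurd hxA (hUa x hx)
      · exact fun hx => ⟨Or.inl hx, hTA hx⟩
    have h2 : (T ∪ U) \ A = U := by
      ext x
      simp only [Finset.mem_sdiff, Finset.mem_union]
      constructor
      · rintro ⟨hx | hx, hxA⟩
        · exact absurd (hTA hx) hxA
        · exact hx
      · exact fun hx => ⟨Or.inr hx, hUa x hx⟩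
    show ((T ∪ U) ∩ A, (T ∪ U) \ A) = (T, U)
    rw [h1, h2]

/-- Let `M ≥ 1`, `0 ≤ w ≤ 2M`, and let `A` be a subset of size `M` in a
`2M`-element set `X`. Let `N` be the number of `w`-element subsets `S ⊆ X` with `|S ∩ A|`
even. If `w` is even then `2N = C(2M, w) + (-1)^(w/2) C(M, w/2)`, and if `w` is odd then
`2N = C(2M, w)`. -/
theorem even_intersection_count (M w : ℕ) (hM : 1 ≤ M) (hw : w ≤ 2 * M)
    (X : Type) [Fintype X] [DecidableEq X] (hX : Fintype.card X = 2 * M)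
    (A : Finset X) (hA : A.card = M) :
    (Even w →
      2 * (((Finset.powersetCard w (Finset.univ : Finset X)).filter
          fun S => Even (S ∩ A).card).card : ℤ) =
        ((2 * M).choose w : ℤ) + (-1) ^ (w / 2) * (M.choose (w / 2) : ℤ)) ∧
    (Odd w →
      2 * (((Finset.powersetCard w (Finset.univ : Finset X)).filter
          fun S => Even (S ∩ A).card).card : ℤ) =
        ((2 * M).choose w : ℤ)) := by
  -- decompose N into fibers
  have hsplit : ((Finset.powersetCard w (Finset.univ : Finset X)).filter
        fun S => Even (S ∩ A).card).card
      = ∑ k ∈ (range (w + 1)).filter (fun k => Even k),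
          ((Finset.powersetCard w (Finset.univ : Finset X)).filter
            fun S => (S ∩ A).card = k).card := by
    rw [Finset.card_eq_sum_card_fiberwise
      (f := fun S => (S ∩ A).card)
      (t := (range (w + 1)).filter (fun k => Even k)) ?_]
    · refine Finset.sum_congr rfl fun k hk => ?_
      simp only [Finset.mem_filter, Finset.mem_range] at hk
      congr 1
      rw [Finset.filter_filter]
      refine Finset.filter_congr fun S hS => ?_
      constructor
      · rintro ⟨-, h⟩; exact h
      · intro h; exact ⟨h ▸ hk.2, h⟩
    · intro S hS
      simp only [Finset.mem_coe, Finset.mem_filter, Finset.mem_powersetCard] at hS ⊢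
      obtain ⟨⟨-, hcard⟩, hev⟩ := hS
      refine ⟨Finset.mem_range.2 ?_, hev⟩
      have := Finset.card_le_card (Finset.inter_subset_left : S ∩ A ⊆ S)
      omega
  have hfib : ∀ k ∈ (range (w + 1)).filter (fun k => Even k),
      ((Finset.powersetCard w (Finset.univ : Finset X)).filter
        fun S => (S ∩ A).card = k).card = M.choose k * M.choose (w - k) := by
    intro k hk
    simp only [Finset.mem_filter, Finset.mem_range] at hk
    exact fiber_count' M w k (by omega) X hX A hA
  rw [Finset.sum_congr rfl hfib] at hsplit
  -- main computation in ℤ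
  have hvdm : ((2 * M).choose w : ℤ)
      = ∑ k ∈ range (w + 1), (M.choose k : ℤ) * (M.choose (w - k) : ℤ) := by
    have := Nat.add_choose_eq M M w
    rw [Finset.Nat.sum_antidiagonal_eq_sum_range_succ_mk] at this
    rw [show 2 * M = M + M by ring, this]
    push_cast
    rfl
  have key : 2 * (((Finset.powersetCard w (Finset.univ : Finset X)).filter
        fun S => Even (S ∩ A).card).card : ℤ)
      = ((2 * M).choose w : ℤ)
        + (if Even w then (-1) ^ (w / 2) * (M.choose (w / 2) : ℤ) else 0) := by
    rw [hsplit]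
    push_cast
    rw [Finset.sum_filter, Finset.mul_sum, hvdm, ← alt_vandermonde' M w hw,
      ← Finset.sum_add_distrib]
    refine Finset.sum_congr rfl fun k _ => ?_
    by_cases hk : Even k
    · rw [if_pos hk, hk.neg_one_pow]
      ring
    · rw [if_neg hk, (Nat.not_even_iff_odd.1 hk).neg_one_pow]
      ring
  constructor
  · intro hev
    rw [key, if_pos hev]
  · intro hodd
    rw [key, if_neg (Nat.not_even_iff_odd.2 hodd), add_zero]
end

section
/- For all reals \epsilon, \delta with 0 < \epsilon < 1/2 and 0 < \delta < 1/2 there exists a positive integer n_0 such that the following holds: for every even integer n = 2M \ge n_0, every subset A of an n-element set X with |A| = M, and every even integer w with \epsilon n \le w \le (1-\epsilon) n, the number of w-element subsets S \subseteq X with |S \cap A| even is at most (1/2 + \delta) \binom{n}{w}. -/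
open Polynomial Finset

private lemma choose_mono_of_le_half {M a b : ℕ} (hab : a ≤ b) (hb : b ≤ M / 2) :
    M.choose a ≤ M.choose b := by
  induction b with
  | zero => simp_all
  | succ n ih =>
    rcases Nat.lt_or_ge a (n + 1) with h | h
    · exact le_trans (ih (by omega) (by omega))
        (Nat.choose_le_succ_of_lt_half_left (by omega))
    · have : a = n + 1 := by omega
      subst this; rfl

private lemma le_choose_of {M k : ℕ} (h1 : 1 ≤ k) (h2 : k + 1 ≤ M) : M ≤ M.choose k := by
  rcases le_or_gt k (M / 2) with h | h
  · calc M = M.choose 1 := (Nat.choose_one_right M).symm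
      _ ≤ M.choose k := choose_mono_of_le_half h1 h
  · have hk : k ≤ M := by omega
    rw [← Nat.choose_symm hk]
    calc M = M.choose 1 := (Nat.choose_one_right M).symm
      _ ≤ M.choose (M - k) := choose_mono_of_le_half (by omega) (by omega)

private lemma signed_sum_eq (X : Type) [Fintype X] [DecidableEq X] (M : ℕ)
    (hcard : Fintype.card X = 2 * M) (A : Finset X) (hA : A.card = M) (w : ℕ) :
    ∑ S ∈ Finset.powersetCard w (Finset.univ : Finset X), (-1 : ℤ) ^ (S ∩ A).card
      = ((1 - Polynomial.X ^ 2 : Polynomial ℤ) ^ M).coeff w := by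
  set c : X → ℤ := fun i => if i ∈ A then -1 else 1 with hc
  have hprod : ∏ i : X, (Polynomial.C (c i) * Polynomial.X + 1)
      = (1 - Polynomial.X ^ 2 : Polynomial ℤ) ^ M := by
    have h1 : ∏ i : X, (Polynomial.C (c i) * Polynomial.X + 1)
        = ∏ i : X, (if i ∈ A then (1 - Polynomial.X : Polynomial ℤ)
            else (1 + Polynomial.X)) := by
      refine Finset.prod_congr rfl fun i _ => ?_
      by_cases h : i ∈ A <;> simp [hc, h] <;> ring
    rw [h1, Finset.prod_ite, Finset.prod_const, Finset.prod_const]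
    have h2 : (Finset.univ.filter (fun i => i ∈ A)) = A := by
      simp [Finset.filter_mem_eq_inter]
    have h3 : (Finset.univ.filter (fun i => ¬ i ∈ A)).card = M := by
      have := Finset.card_filter_add_card_filter_not
        (s := (Finset.univ : Finset X)) (p := fun i => i ∈ A)
      rw [h2, Finset.card_univ, hcard, hA] at this
      omega
    rw [h2, hA, h3, ← mul_pow]
    congr 1
    ring
  have hcoeff : (∏ i : X, (Polynomial.C (c i) * Polynomial.X + 1)).coeff w
      = ∑ S ∈ Finset.powersetCard w (Finset.univ : Finset X), ∏ i ∈ S, c i := by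
    rw [Finset.prod_add]
    have h4 : ∀ t : Finset X,
        ((∏ i ∈ t, Polynomial.C (c i) * Polynomial.X) * ∏ i ∈ Finset.univ \ t, (1 : Polynomial ℤ))
          = Polynomial.C (∏ i ∈ t, c i) * Polynomial.X ^ t.card := by
      intro t
      rw [Finset.prod_const_one, mul_one, Finset.prod_mul_distrib, Finset.prod_const, map_prod]
    simp only [h4]
    rw [Polynomial.finset_sum_coeff]
    simp only [Polynomial.coeff_C_mul, Polynomial.coeff_X_pow]
    rw [Finset.powersetCard_eq_filter, Finset.sum_filter]
    refine Finset.sum_congr rfl fun t _ => ?_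
    by_cases h : t.card = w
    · simp [h]
    · simp [h, Ne.symm h]
  have h5 : ∀ S : Finset X, (∏ i ∈ S, c i) = (-1 : ℤ) ^ (S ∩ A).card := by
    intro S
    rw [hc]
    rw [Finset.prod_ite, Finset.prod_const, Finset.prod_const, one_pow, mul_one,
      Finset.filter_mem_eq_inter]
  rw [← hprod, hcoeff]
  exact Finset.sum_congr rfl fun S _ => (h5 S).symm

private lemma coeff_one_sub_X_sq_pow (M m : ℕ) (hm : m ≤ M) :
    ((1 - Polynomial.X ^ 2 : Polynomial ℤ) ^ M).coeff (2 * m)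
      = (-1 : ℤ) ^ m * (M.choose m) := by
  have hexp : (1 - Polynomial.X ^ 2 : Polynomial ℤ) ^ M
      = ∑ k ∈ Finset.range (M + 1),
          Polynomial.C ((-1 : ℤ) ^ k * (M.choose k : ℤ)) * Polynomial.X ^ (2 * k) := by
    rw [sub_eq_add_neg, add_comm, add_pow]
    refine Finset.sum_congr rfl fun k hk => ?_
    rw [one_pow, mul_one, neg_pow, map_mul, map_pow, map_neg, map_one,
      Polynomial.C_eq_natCast, pow_mul]
    ring
  rw [hexp, Polynomial.finset_sum_coeff]
  simp only [Polynomial.coeff_C_mul, Polynomial.coeff_X_pow]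
  rw [Finset.sum_eq_single m]
  · simp
  · intro k _ hk
    have : ¬ (2 * m = 2 * k) := by omega
    simp [this]
  · intro h
    exact absurd (Finset.mem_range.mpr (by omega)) h

/-- For all `0 < ε < 1/2` and `0 < δ < 1/2` there exists `n₀ ≥ 1` such that
for every even `n = 2M ≥ n₀`, every half-size subset `A` of an `n`-element set `X`, and every
even `w` with `εn ≤ w ≤ (1-ε)n`, the number of `w`-element subsets `S ⊆ X` with `|S ∩ A|`
even is at most `(1/2 + δ) C(n, w)`. -/
theorem even_split_probability_bound (ε δ : ℝ)
    (hε0 : 0 < ε) (hε : ε < 1 / 2) (hδ0 : 0 < δ) (hδ : δ < 1 / 2) :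
    ∃ n₀ : ℕ, 0 < n₀ ∧
      ∀ (X : Type) [Fintype X] [DecidableEq X] (M : ℕ),
        Fintype.card X = 2 * M → n₀ ≤ 2 * M →
        ∀ A : Finset X, A.card = M →
        ∀ w : ℕ, Even w → ε * (2 * M) ≤ w → (w : ℝ) ≤ (1 - ε) * (2 * M) →
        (((Finset.powersetCard w (Finset.univ : Finset X)).filter
            fun S => Even (S ∩ A).card).card : ℝ) ≤
          (1 / 2 + δ) * ((2 * M).choose w) := by
  refine ⟨⌈2 / ε⌉₊ + ⌈1 / δ⌉₊ + 1, by omega, ?_⟩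
  intro X _ _ M hcardX hn0 A hA w hw hw1 hw2
  -- basic real bounds
  have hceil1 : (⌈2 / ε⌉₊ : ℕ) ≤ 2 * M := by omega
  have hceil2 : (⌈1 / δ⌉₊ : ℕ) ≤ 2 * M := by omega
  have h2e : (2 / ε : ℝ) ≤ 2 * M := by
    calc (2 / ε : ℝ) ≤ ⌈2 / ε⌉₊ := Nat.le_ceil _
      _ ≤ 2 * M := by exact_mod_cast hceil1
  have h1d : (1 / δ : ℝ) ≤ 2 * M := by
    calc (1 / δ : ℝ) ≤ ⌈1 / δ⌉₊ := Nat.le_ceil _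
      _ ≤ 2 * M := by exact_mod_cast hceil2
  have hεM : (2 : ℝ) ≤ ε * (2 * M) := by
    rw [div_le_iff₀ hε0] at h2e
    nlinarith
  have hδM : (1 : ℝ) ≤ 2 * δ * M := by
    rw [div_le_iff₀ hδ0] at h1d
    nlinarith
  have hwlb : 2 ≤ w := by
    have : (2 : ℝ) ≤ w := le_trans hεM hw1
    exact_mod_cast this
  have hwub : w + 2 ≤ 2 * M := by
    have h : (w : ℝ) + 2 ≤ 2 * M := by nlinarith
    exact_mod_cast h
  obtain ⟨m, hm⟩ := hw
  have hww : 2 * m = w := by omega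
  have hm1 : 1 ≤ m := by omega
  have hm2 : m + 1 ≤ M := by omega
  -- counting setup
  set P := Finset.powersetCard w (Finset.univ : Finset X) with hP
  set E := P.filter (fun S => Even (S ∩ A).card) with hE
  set O := P.filter (fun S => ¬ Even (S ∩ A).card) with hO
  have hEO : E.card + O.card = (2 * M).choose w := by
    rw [hE, hO, Finset.card_filter_add_card_filter_not, hP,
      Finset.card_powersetCard, Finset.card_univ, hcardX]
  -- signed sum
  have hsum : ∑ S ∈ P, (-1 : ℤ) ^ (S ∩ A).card = (-1 : ℤ) ^ m * (M.choose m) := by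
    rw [hP, signed_sum_eq X M hcardX A hA w, ← hww,
      coeff_one_sub_X_sq_pow M m (by omega)]
  have hsplit : ∑ S ∈ P, (-1 : ℤ) ^ (S ∩ A).card = (E.card : ℤ) - (O.card : ℤ) := by
    rw [← Finset.sum_filter_add_sum_filter_not P (fun S => Even (S ∩ A).card), ← hE, ← hO]
    have h1 : ∑ S ∈ E, (-1 : ℤ) ^ (S ∩ A).card = E.card := by
      rw [Finset.sum_congr rfl (fun S hS => (Finset.mem_filter.mp hS).2.neg_one_pow)]
      simp
    have h2 : ∑ S ∈ O, (-1 : ℤ) ^ (S ∩ A).card = -(O.card : ℤ) := by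
      have : ∀ S ∈ O, (-1 : ℤ) ^ (S ∩ A).card = -1 := fun S hS =>
        (Nat.not_even_iff_odd.mp (Finset.mem_filter.mp hS).2).neg_one_pow
      rw [Finset.sum_congr rfl this]
      simp
    rw [h1, h2]
    ring
  have hsign : ((-1 : ℤ) ^ m * (M.choose m) : ℤ) ≤ (M.choose m : ℤ) := by
    rcases Nat.even_or_odd m with h | h
    · rw [h.neg_one_pow, one_mul]
    · rw [h.neg_one_pow]
      have : (0 : ℤ) ≤ (M.choose m : ℤ) := Int.natCast_nonneg _
      linarith
  have hkey : 2 * (E.card : ℤ) ≤ ((2 * M).choose w : ℤ) + (M.choose m : ℤ) := by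
    have h1 : (E.card : ℤ) + (O.card : ℤ) = ((2 * M).choose w : ℤ) := by exact_mod_cast hEO
    have h2 : (E.card : ℤ) - (O.card : ℤ) ≤ (M.choose m : ℤ) := by
      rw [← hsplit, hsum]; exact hsign
    linarith
  -- Vandermonde lower bound
  have hV : M.choose m * M.choose m ≤ (2 * M).choose w := by
    rw [two_mul, Nat.add_choose_eq]
    exact Finset.single_le_sum (f := fun ij : ℕ × ℕ => M.choose ij.1 * M.choose ij.2)
      (fun _ _ => Nat.zero_le _)
      (show (m, m) ∈ Finset.HasAntidiagonal.antidiagonal w by rw [Finset.HasAntidiagonal.mem_antidiagonal]; omega)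
  have hMle : M ≤ M.choose m := le_choose_of hm1 hm2
  -- real inequalities
  have hCpos : 0 < ((2 * M).choose w : ℝ) := by
    exact_mod_cast Nat.choose_pos (by omega)
  have hVR : (M.choose m : ℝ) * (M.choose m : ℝ) ≤ ((2 * M).choose w : ℝ) := by
    exact_mod_cast hV
  have hMleR : (M : ℝ) ≤ (M.choose m : ℝ) := by exact_mod_cast hMle
  have hCmpos : (0 : ℝ) < (M.choose m : ℝ) := by
    exact_mod_cast Nat.choose_pos (by omega)
  have hMpos : (0 : ℝ) < (M : ℝ) := by
    have : 0 < M := by omega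
    exact_mod_cast this
  have hCm : (M.choose m : ℝ) ≤ 2 * δ * ((2 * M).choose w : ℝ) := by
    have h1 : (M : ℝ) * (M.choose m : ℝ) ≤ ((2 * M).choose w : ℝ) :=
      le_trans (mul_le_mul_of_nonneg_right hMleR (le_of_lt hCmpos)) hVR
    nlinarith [mul_le_mul_of_nonneg_right hδM (le_of_lt hCmpos)]
  have hkeyR : 2 * (E.card : ℝ) ≤ ((2 * M).choose w : ℝ) + (M.choose m : ℝ) := by
    exact_mod_cast hkey
  linarith
end

section
/- Let R be a real number with 0 < R < 1 and let \epsilon, \delta be reals with 0 < \epsilon < 1/2 and 0 < \delta < 1/2. Then there exists m_0 such that for all m \ge m_0 the following holds. Set n = 2^m, let r be the least nonnegative integer with \sum_{i=0}^{r} \binom{m}{i} \ge R n, and for each a : Fin r \to F_2 let B_a = {v : (Fin m \to F_2) | v_i = a_i for all i \in Fin r} (a block of size 2^{m-r}; the 2^r blocks B_a partition (Fin m \to F_2)). Then for every integer w with \epsilon n \le w \le (1-\epsilon) n, the number of w-element subsets S of (Fin m \to F_2) such that |S \cap B_a| is even for every a : Fin r \to F_2 is at most (1/2 + \delta)^{2^r}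 \binom{n}{w}. -/
open Finset Polynomial

lemma coeff_one_add_smul_X_pow (c : ℝ) (j : ℕ) : ∀ k : ℕ,
    ((1 + C c * X : ℝ[X]) ^ j).coeff k = c ^ k * j.choose k := by
  induction j with
  | zero => intro k; cases k <;> simp [coeff_one]
  | succ j ih =>
    intro k
    have hsplit : ((1 + C c * X : ℝ[X]) ^ (j+1)) =
        (1 + C c * X) ^ j + C c * ((1 + C c * X) ^ j * X) := by ring
    rw [hsplit]
    cases k with
    | zero =>
      simp [coeff_add, coeff_C_mul, coeff_mul_X_zero, ih]
    | succ k =>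
      rw [coeff_add, coeff_C_mul, coeff_mul_X, ih, ih, Nat.choose_succ_succ]
      push_cast
      ring

lemma coeff_mul_le_coeff_mul (p q p' q' : ℝ[X]) (hp : ∀ i, |p.coeff i| ≤ p'.coeff i)
    (hq : ∀ i, |q.coeff i| ≤ q'.coeff i) (k : ℕ) : |(p*q).coeff k| ≤ (p'*q').coeff k := by
  rw [coeff_mul, coeff_mul]
  refine (Finset.abs_sum_le_sum_abs _ _).trans (Finset.sum_le_sum ?_)
  intro ij _
  rw [abs_mul]
  exact mul_le_mul (hp _) (hq _) (abs_nonneg _) ((abs_nonneg _).trans (hp _))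

lemma coeff_pow_le (p p' : ℝ[X]) (hp : ∀ i, |p.coeff i| ≤ p'.coeff i) (j : ℕ) :
    ∀ i, |(p^j).coeff i| ≤ (p'^j).coeff i := by
  induction j with
  | zero => intro i; simp [coeff_one]; split_ifs <;> norm_num
  | succ j ih =>
    intro i
    rw [pow_succ, pow_succ]
    exact coeff_mul_le_coeff_mul _ _ _ _ ih hp i

lemma eval_coeff_le (q : ℝ[X]) (h : ∀ i, 0 ≤ q.coeff i) {ρ : ℝ} (hρ : 0 < ρ) (w : ℕ) :
    q.coeff w * ρ^w ≤ q.eval ρ := by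
  rw [eval_eq_sum_range' (n := q.natDegree + w + 1) (by omega)]
  exact Finset.single_le_sum (f := fun i => q.coeff i * ρ ^ i)
    (fun i _ => mul_nonneg (h i) (pow_nonneg hρ.le _)) (Finset.mem_range.2 (by omega))

lemma kraw_coeff_bound (n w j : ℕ) (h2j : 2*j ≤ n) {ρ : ℝ} (hρ : 0 < ρ) :
    |(((1 - X)^j * (1+X)^(n-j) : ℝ[X])).coeff w| * ρ^w ≤ (1+ρ^2)^j * (1+ρ)^(n-2*j) := by
  have hid : ((1-X)^j * (1+X)^(n-j) : ℝ[X]) = (1 - X^2)^j * (1+X)^(n-2*j) := by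
    have h : n - j = j + (n - 2*j) := by omega
    rw [h, pow_add, ← mul_assoc, ← mul_pow]
    congr 2
    ring
  have base : ∀ i, |(1 - X^2 : ℝ[X]).coeff i| ≤ (1 + X^2 : ℝ[X]).coeff i := by
    intro i
    rw [coeff_sub, coeff_add, coeff_one, coeff_X_pow]
    split_ifs <;> norm_num
  have hq : ∀ i, |((1+X:ℝ[X])^(n-2*j)).coeff i| ≤ ((1+X:ℝ[X])^(n-2*j)).coeff i := by
    intro i
    rw [coeff_one_add_X_pow]
    simp [abs_of_nonneg]
  have key : ∀ i, |(((1 - X^2)^j * (1+X)^(n-2*j) : ℝ[X])).coeff i| ≤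
      (((1 + X^2)^j * (1+X)^(n-2*j) : ℝ[X])).coeff i := fun i =>
    coeff_mul_le_coeff_mul _ _ _ _ (coeff_pow_le _ _ base j) hq i
  have hnn : ∀ i, 0 ≤ (((1 + X^2)^j * (1+X)^(n-2*j) : ℝ[X])).coeff i := fun i =>
    (abs_nonneg _).trans (key i)
  have heval : (((1 + X^2)^j * (1+X)^(n-2*j) : ℝ[X])).eval ρ = (1+ρ^2)^j * (1+ρ)^(n-2*j) := by
    simp
  calc |(((1 - X)^j * (1+X)^(n-j) : ℝ[X])).coeff w| * ρ^w
      ≤ (((1 + X^2)^j * (1+X)^(n-2*j) : ℝ[X])).coeff w * ρ^w := by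
        rw [hid]
        exact mul_le_mul_of_nonneg_right (key w) (pow_nonneg hρ.le w)
    _ ≤ _ := by rw [← heval]; exact eval_coeff_le _ hnn hρ w

lemma choose_mul_nat_up (n w k : ℕ) (hk : k < w) (hwn : w < n) :
    n.choose k * (n - w) ≤ n.choose (k+1) * w := by
  have h := Nat.choose_succ_right_eq n k
  have key : n.choose k * (n - w) * (k+1) ≤ n.choose (k+1) * w * (k+1) := by
    have h2 : n.choose (k+1) * w * (k+1) = n.choose k * ((n-k) * w) := by
      rw [mul_right_comm, h]; ring
    have h3 : (n - w) * (k+1) ≤ (n - k) * w :=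
      Nat.mul_le_mul (Nat.sub_le_sub_left (le_of_lt hk) n) hk
    calc n.choose k * (n - w) * (k+1) = n.choose k * ((n-w) * (k+1)) := by ring
      _ ≤ n.choose k * ((n-k) * w) := Nat.mul_le_mul_left _ h3
      _ = n.choose (k+1) * w * (k+1) := h2.symm
  exact Nat.le_of_mul_le_mul_right key (Nat.succ_pos k)

lemma choose_mul_nat_down (n w k : ℕ) (hk : w ≤ k) (hwn : w ≤ n) :
    n.choose (k+1) * w ≤ n.choose k * (n - w) := by
  have h := Nat.choose_succ_right_eq n k
  have key : n.choose (k+1) * w * (k+1) ≤ n.choose k * (n - w) * (k+1) := by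
    have h2 : n.choose (k+1) * w * (k+1) = n.choose k * ((n-k) * w) := by
      rw [mul_right_comm, h]; ring
    have h3 : (n - k) * w ≤ (n - w) * (k+1) :=
      Nat.mul_le_mul (Nat.sub_le_sub_left hk n) (Nat.le_succ_of_le hk)
    calc n.choose (k+1) * w * (k+1) = n.choose k * ((n-k) * w) := h2
      _ ≤ n.choose k * ((n-w) * (k+1)) := Nat.mul_le_mul_left _ h3
      _ = n.choose k * (n - w) * (k+1) := by ring
  exact Nat.le_of_mul_le_mul_right key (Nat.succ_pos k)

lemma central_bound (n w : ℕ) (hw0 : 0 < w) (hwn : w < n) :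
    ((1:ℝ) + w/((n:ℝ)-w))^n ≤ ((n:ℝ)+1) * n.choose w * ((w:ℝ)/((n:ℝ)-w))^w := by
  have hnw : (0:ℝ) < (n:ℝ) - w := by
    have : (w:ℝ) < n := by exact_mod_cast hwn
    linarith
  set ρ : ℝ := (w:ℝ)/((n:ℝ)-w) with hρdef
  have hρ : 0 < ρ := div_pos (by exact_mod_cast hw0) hnw
  set u : ℕ → ℝ := fun k => (n.choose k : ℝ) * ρ^k with hu
  -- cast of nat inequalities
  have castsub : ((n - w : ℕ) : ℝ) = (n:ℝ) - w := by
    rw [Nat.cast_sub (le_of_lt hwn)]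
  have up : ∀ k, k < w → u k ≤ u (k+1) := by
    intro k hk
    have hnat := choose_mul_nat_up n w k hk hwn
    have hr : (n.choose k : ℝ) * ((n:ℝ) - w) ≤ (n.choose (k+1) : ℝ) * w := by
      rw [← castsub]; exact_mod_cast hnat
    have : (n.choose k : ℝ) ≤ (n.choose (k+1) : ℝ) * ρ := by
      rw [hρdef, mul_div_assoc']
      rw [le_div_iff₀ hnw]
      linarith [hr]
    calc u k = (n.choose k : ℝ) * ρ^k := rfl
      _ ≤ ((n.choose (k+1) : ℝ) * ρ) * ρ^k :=
          mul_le_mul_of_nonneg_right this (pow_nonneg hρ.le k)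
      _ = u (k+1) := by rw [hu]; ring
  have down : ∀ k, w ≤ k → u (k+1) ≤ u k := by
    intro k hk
    have hnat := choose_mul_nat_down n w k hk (le_of_lt hwn)
    have hr : (n.choose (k+1) : ℝ) * w ≤ (n.choose k : ℝ) * ((n:ℝ) - w) := by
      rw [← castsub]; exact_mod_cast hnat
    have : (n.choose (k+1) : ℝ) * ρ ≤ (n.choose k : ℝ) := by
      rw [hρdef, mul_div_assoc']
      rw [div_le_iff₀ hnw]
      linarith [hr]
    calc u (k+1) = ((n.choose (k+1) : ℝ) * ρ) * ρ^k := by rw [hu]; ring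
      _ ≤ (n.choose k : ℝ) * ρ^k :=
          mul_le_mul_of_nonneg_right this (pow_nonneg hρ.le k)
      _ = u k := rfl
  have hmax : ∀ k, u k ≤ u w := by
    intro k
    rcases le_or_gt k w with h | h
    · have mono : Monotone (fun k => u (min k w)) := by
        apply monotone_nat_of_le_succ
        intro k
        rcases lt_or_ge k w with hkw | hkw
        · rcases lt_or_ge (k+1) w with h2 | h2
          · simp only [min_eq_left hkw.le, min_eq_left h2.le]; exact up k hkw
          · have : min (k+1) w = w := min_eq_right h2
            rw [this, min_eq_left hkw.le]
            have hk1 : k + 1 = w := le_antisymm (Nat.succ_le_of_lt hkw) h2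
            rw [← hk1]; exact up k hkw
        · simp [min_eq_right hkw, min_eq_right (le_of_lt (Nat.lt_succ_of_le hkw))]
      have := mono h
      simpa [min_eq_left h, min_self] using this
    · have anti : Antitone (fun k => u (max k w)) := by
        apply antitone_nat_of_succ_le
        intro k
        rcases le_or_gt w k with hkw | hkw
        · simp only [max_eq_left (le_of_lt (Nat.lt_succ_of_le hkw)), max_eq_left hkw]
          exact down k hkw
        · have h1 : max k w = w := max_eq_right hkw.le
          have h2 : max (k+1) w = w := max_eq_right (Nat.succ_le_of_lt hkw)
          rw [h1, h2]
      have := anti (le_of_lt h)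
      simpa [max_eq_left (le_of_lt h), max_self] using this
  have expand : ((1:ℝ) + ρ)^n = ∑ k ∈ range (n+1), u k := by
    rw [add_comm, add_pow]
    apply Finset.sum_congr rfl
    intro k _
    simp [hu]; ring
  calc ((1:ℝ) + ρ)^n = ∑ k ∈ range (n+1), u k := expand
    _ ≤ (n+1) • u w := Finset.sum_le_card_nsmul _ _ _ (fun k _ => hmax k) |>.trans (by simp)
    _ = ((n:ℝ)+1) * n.choose w * ρ^w := by
        rw [nsmul_eq_mul, hu]
        push_cast
        ring
lemma kraw_ratio (n w j : ℕ) (ε : ℝ) (hε0 : 0 < ε) (hε : ε < 1/2) (h2j : 2*j ≤ n)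
    (hw1 : ε * n ≤ w) (hw2 : (w:ℝ) ≤ (1-ε)*n) (hn : 0 < n) :
    |(((1 - X)^j * (1+X)^(n-j) : ℝ[X])).coeff w| ≤
      ((n:ℝ)+1) * n.choose w * (1 - 2*ε*(1-ε))^j := by
  have hnR : (0:ℝ) < n := by exact_mod_cast hn
  have hw0 : 0 < w := by
    by_contra h
    push_neg at h
    interval_cases w
    · simp at hw1; nlinarith
  have hwn : w < n := by
    have : (w:ℝ) < n := by nlinarith
    exact_mod_cast this
  have hnw : (0:ℝ) < (n:ℝ) - w := by
    have : (w:ℝ) < n := by exact_mod_cast hwn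
    linarith
  set ρ : ℝ := (w:ℝ)/((n:ℝ)-w) with hρdef
  have hρ : 0 < ρ := div_pos (by exact_mod_cast hw0) hnw
  set c : ℝ := 1 - 2*ε*(1-ε) with hc
  have hwR : (0:ℝ) < w := by exact_mod_cast hw0
  -- key scalar inequality : 1 + ρ^2 ≤ c * (1+ρ)^2
  have hkey : 1 + ρ^2 ≤ c * (1+ρ)^2 := by
    have h1 : (1+ρ) = (n:ℝ)/((n:ℝ)-w) := by
      rw [hρdef]; field_simp; ring
    have h2 : 1 + ρ^2 = (((n:ℝ)-w)^2 + w^2)/((n:ℝ)-w)^2 := by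
      rw [hρdef]; field_simp
    rw [h1, h2, div_pow, ← mul_div_assoc, div_le_div_iff_of_pos_right (by positivity)]
    have hq : 0 ≤ ((w:ℝ) - ε*n) * ((1-ε)*n - w) := by
      apply mul_nonneg <;> linarith
    nlinarith [sq_nonneg ((n:ℝ) - w), sq_nonneg (w:ℝ)]
  have hc0 : 0 ≤ c := by nlinarith [sq_nonneg (1 + ρ)]
  have h1ρ : (0:ℝ) < 1 + ρ := by linarith
  -- combine
  have hA := kraw_coeff_bound n w j h2j hρ
  have hB := central_bound n w hw0 hwn
  set K : ℝ := |(((1 - X)^j * (1+X)^(n-j) : ℝ[X])).coeff w| with hK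
  set M : ℝ := ((n:ℝ)+1) * n.choose w with hM
  have hM0 : 0 < M := by
    have : 0 < n.choose w := Nat.choose_pos (le_of_lt hwn)
    have : (0:ℝ) < n.choose w := by exact_mod_cast this
    positivity
  -- multiply by positive quantity ρ^w * (1+ρ)^(2j)
  have hmul : K * (ρ^w * (1+ρ)^(2*j)) ≤ M * c^j * (ρ^w * (1+ρ)^(2*j)) := by
    have e1 : K * (ρ^w * (1+ρ)^(2*j)) = (K * ρ^w) * (1+ρ)^(2*j) := by ring
    have step1 : K * ρ^w * (1+ρ)^(2*j) ≤ ((1+ρ^2)^j * (1+ρ)^(n-2*j)) * (1+ρ)^(2*j) := by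
      apply mul_le_mul_of_nonneg_right hA (by positivity)
    have e2 : ((1+ρ^2)^j * (1+ρ)^(n-2*j)) * (1+ρ)^(2*j) = (1+ρ^2)^j * (1+ρ)^n := by
      rw [mul_assoc, ← pow_add]
      congr 2
      omega
    have step2 : (1+ρ^2)^j * (1+ρ)^n ≤ (1+ρ^2)^j * (M * ρ^w) := by
      apply mul_le_mul_of_nonneg_left _ (by positivity)
      calc ((1:ℝ)+ρ)^n ≤ ((n:ℝ)+1) * n.choose w * ρ^w := hB
        _ = M * ρ^w := rfl
    have step3 : (1+ρ^2)^j * (M * ρ^w) ≤ (c*(1+ρ)^2)^j * (M * ρ^w) := by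
      apply mul_le_mul_of_nonneg_right _ (by positivity)
      exact pow_le_pow_left₀ (by positivity) hkey j
    have e3 : (c*(1+ρ)^2)^j * (M * ρ^w) = M * c^j * (ρ^w * (1+ρ)^(2*j)) := by
      rw [mul_pow, ← pow_mul]
      ring_nf
    calc K * (ρ^w * (1+ρ)^(2*j)) = K * ρ^w * (1+ρ)^(2*j) := by ring
      _ ≤ ((1+ρ^2)^j * (1+ρ)^(n-2*j)) * (1+ρ)^(2*j) := step1
      _ = (1+ρ^2)^j * (1+ρ)^n := e2
      _ ≤ (1+ρ^2)^j * (M * ρ^w) := step2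
      _ ≤ (c*(1+ρ)^2)^j * (M * ρ^w) := step3
      _ = M * c^j * (ρ^w * (1+ρ)^(2*j)) := e3
  have hpos : (0:ℝ) < ρ^w * (1+ρ)^(2*j) := by positivity
  exact le_of_mul_le_mul_right hmul hpos
section Counting
variable {V : Type*} [Fintype V] [DecidableEq V]

lemma count_inter (A : Finset V) (w k : ℕ) (hk : k ≤ w) :
    ((powersetCard w (univ : Finset V)).filter (fun S => (S ∩ A).card = k)).card
      = A.card.choose k * ((Fintype.card V - A.card).choose (w - k)) := by
  have htarget : (powersetCard k A ×ˢ powersetCard (w-k) ((univ : Finset V) \ A)).card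
      = A.card.choose k * ((Fintype.card V - A.card).choose (w - k)) := by
    rw [Finset.card_product, Finset.card_powersetCard, Finset.card_powersetCard,
      Finset.card_univ_diff]
  rw [← htarget]
  apply Finset.card_nbij' (i := fun S => (S ∩ A, S \ A)) (j := fun P => P.1 ∪ P.2)
  · intro S hS
    rw [Finset.mem_coe, Finset.mem_filter, Finset.mem_powersetCard] at hS
    obtain ⟨⟨hSu, hSw⟩, hSk⟩ := hS
    rw [Finset.mem_coe, Finset.mem_product, Finset.mem_powersetCard, Finset.mem_powersetCard]
    refine ⟨⟨Finset.inter_subset_right, hSk⟩, ?_, ?_⟩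
    · intro x hx
      rw [Finset.mem_sdiff] at hx ⊢
      exact ⟨Finset.mem_univ x, hx.2⟩
    · show (S \ A).card = w - k
      have := Finset.card_inter_add_card_sdiff S A
      omega
  · intro P hP
    rw [Finset.mem_coe, Finset.mem_product, Finset.mem_powersetCard, Finset.mem_powersetCard] at hP
    obtain ⟨⟨hP1, hP1c⟩, hP2, hP2c⟩ := hP
    have hdisj : Disjoint P.1 P.2 := by
      rw [Finset.disjoint_left]
      intro x hx1 hx2
      exact (Finset.mem_sdiff.1 (hP2 hx2)).2 (hP1 hx1)
    have hPA : (P.1 ∪ P.2) ∩ A = P.1 := by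
      ext x
      simp only [Finset.mem_inter, Finset.mem_union]
      constructor
      · rintro ⟨hx1 | hx2, hxA⟩
        · exact hx1
        · exact absurd hxA (Finset.mem_sdiff.1 (hP2 hx2)).2
      · intro hx
        exact ⟨Or.inl hx, hP1 hx⟩
    rw [Finset.mem_coe, Finset.mem_filter, Finset.mem_powersetCard]
    refine ⟨⟨Finset.subset_univ _, ?_⟩, by rw [hPA, hP1c]⟩
    rw [Finset.card_union_of_disjoint hdisj, hP1c, hP2c]
    omega
  · intro S hS
    simp only
    ext x
    simp only [Finset.mem_union, Finset.mem_inter, Finset.mem_sdiff]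
    tauto
  · intro P hP
    rw [Finset.mem_coe, Finset.mem_product, Finset.mem_powersetCard, Finset.mem_powersetCard] at hP
    obtain ⟨⟨hP1, hP1c⟩, hP2, hP2c⟩ := hP
    have hPA : (P.1 ∪ P.2) ∩ A = P.1 := by
      ext x
      simp only [Finset.mem_inter, Finset.mem_union]
      constructor
      · rintro ⟨hx1 | hx2, hxA⟩
        · exact hx1
        · exact absurd hxA (Finset.mem_sdiff.1 (hP2 hx2)).2
      · intro hx
        exact ⟨Or.inl hx, hP1 hx⟩
    have hPB : (P.1 ∪ P.2) \ A = P.2 := by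
      ext x
      simp only [Finset.mem_sdiff, Finset.mem_union]
      constructor
      · rintro ⟨hx1 | hx2, hxA⟩
        · exact absurd (hP1 hx1) hxA
        · exact hx2
      · intro hx
        exact ⟨Or.inr hx, (Finset.mem_sdiff.1 (hP2 hx)).2⟩
    show ((P.1 ∪ P.2) ∩ A, (P.1 ∪ P.2) \ A) = P
    rw [hPA, hPB]

lemma coeff_eq_sum (j t w : ℕ) : (((1 - X)^j * (1+X)^t : ℝ[X])).coeff w
    = ∑ k ∈ range (w+1), (-1:ℝ)^k * ((j.choose k : ℝ) * (t.choose (w-k) : ℝ)) := by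
  have e1 : ((1 - X : ℝ[X])) = 1 + C (-1) * X := by
    rw [map_neg, Polynomial.C_1]
    ring
  rw [coeff_mul, Finset.Nat.sum_antidiagonal_eq_sum_range_succ_mk]
  apply Finset.sum_congr rfl
  intro k _
  rw [e1, coeff_one_add_smul_X_pow, coeff_one_add_X_pow]
  ring

lemma G_sum_eq (A : Finset V) (w : ℕ) :
    ∑ S ∈ powersetCard w (univ : Finset V), (-1:ℝ)^(S ∩ A).card
      = (((1 - X)^A.card * (1+X)^(Fintype.card V - A.card) : ℝ[X])).coeff w := by
  rw [coeff_eq_sum]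
  have hmap : ∀ S ∈ powersetCard w (univ : Finset V), (S ∩ A).card ∈ range (w+1) := by
    intro S hS
    rw [Finset.mem_powersetCard] at hS
    rw [Finset.mem_range]
    have h2 : (S ∩ A).card ≤ S.card := Finset.card_le_card Finset.inter_subset_left
    omega
  rw [← Finset.sum_fiberwise_of_maps_to hmap (fun S => (-1:ℝ)^(S ∩ A).card)]
  apply Finset.sum_congr rfl
  intro k hk
  have : ∀ S ∈ (powersetCard w (univ : Finset V)).filter (fun S => (S ∩ A).card = k),
      (-1:ℝ)^(S ∩ A).card = (-1:ℝ)^k := by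
    intro S hS
    rw [(Finset.mem_filter.1 hS).2]
  rw [Finset.sum_congr rfl this, Finset.sum_const, count_inter A w k (by
    rw [Finset.mem_range] at hk; omega)]
  rw [nsmul_eq_mul]
  push_cast
  ring

lemma G_compl (A : Finset V) (w : ℕ) :
    ∑ S ∈ powersetCard w (univ : Finset V), (-1:ℝ)^(S ∩ A).card
      = (-1)^w * ∑ S ∈ powersetCard w (univ : Finset V), (-1:ℝ)^(S ∩ ((univ : Finset V) \ A)).card := by
  rw [Finset.mul_sum]
  apply Finset.sum_congr rfl
  intro S hS
  have h1 : S ∩ ((univ : Finset V) \ A) = S \ A := by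
    ext x
    simp [Finset.mem_sdiff, Finset.mem_inter]
  have hw : (S ∩ A).card + (S \ A).card = w := by
    rw [Finset.card_inter_add_card_sdiff]
    exact (Finset.mem_powersetCard.1 hS).2
  rw [h1]
  have : ((-1:ℝ))^((S ∩ A).card) * ((-1:ℝ))^((S \ A).card) = (-1)^w := by
    rw [← pow_add, hw]
  have hsq : ((-1:ℝ))^((S \ A).card) * ((-1:ℝ))^((S \ A).card) = 1 := by
    rw [← pow_add, Even.neg_one_pow ⟨_, rfl⟩]
  calc ((-1:ℝ))^((S ∩ A).card)
      = ((-1:ℝ))^((S ∩ A).card) * (((-1:ℝ))^((S \ A).card) * ((-1:ℝ))^((S \ A).card)) := by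
        rw [hsq, mul_one]
    _ = (((-1:ℝ))^((S ∩ A).card) * ((-1:ℝ))^((S \ A).card)) * ((-1:ℝ))^((S \ A).card) := by ring
    _ = (-1)^w * ((-1:ℝ))^((S \ A).card) := by rw [this]

end Counting
section Blocks
variable {m r : ℕ}

def blkres (hrm : r ≤ m) (v : Fin m → ZMod 2) : Fin r → ZMod 2 := fun i => v (Fin.castLE hrm i)

lemma blkres_sub (hrm : r ≤ m) (v u : Fin m → ZMod 2) :
    blkres hrm (v - u) = blkres hrm v - blkres hrm u := rfl

lemma card_fiber (hrm : r ≤ m) (a : Fin r → ZMod 2) :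
    ((univ : Finset (Fin m → ZMod 2)).filter fun v => blkres hrm v = a).card = 2^(m-r) := by
  have hconst : ∀ a : Fin r → ZMod 2,
      ((univ : Finset (Fin m → ZMod 2)).filter fun v => blkres hrm v = a).card
        = ((univ : Finset (Fin m → ZMod 2)).filter fun v => blkres hrm v = 0).card := by
    intro a
    set v₀ : Fin m → ZMod 2 := fun i => if h : i.val < r then a ⟨i.val, h⟩ else 0 with hv₀def
    have hv₀ : blkres hrm v₀ = a := by
      funext i
      simp only [blkres, hv₀def, Fin.castLE]
      rw [dif_pos i.isLt]
    apply Finset.card_nbij' (i := fun v => v - v₀) (j := fun v => v + v₀)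
    · intro v hv
      rw [Finset.mem_coe, Finset.mem_filter] at hv ⊢
      refine ⟨Finset.mem_univ _, ?_⟩
      rw [blkres_sub, hv.2, hv₀, sub_self]
    · intro v hv
      rw [Finset.mem_coe, Finset.mem_filter] at hv ⊢
      refine ⟨Finset.mem_univ _, ?_⟩
      have : blkres hrm (v + v₀) = blkres hrm v + blkres hrm v₀ := rfl
      rw [this, hv.2, hv₀, zero_add]
    · intro v _; simp
    · intro v _; simp
  have hsum : ((univ : Finset (Fin m → ZMod 2))).card
      = ∑ b : Fin r → ZMod 2, ((univ : Finset (Fin m → ZMod 2)).filter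
          fun v => blkres hrm v = b).card :=
    Finset.card_eq_sum_card_fiberwise (fun x _ => Finset.mem_univ _)
  have hcV : ((univ : Finset (Fin m → ZMod 2))).card = 2^m := by
    rw [Finset.card_univ]
    simp [ZMod.card]
  have hcI : Fintype.card (Fin r → ZMod 2) = 2^r := by simp [ZMod.card]
  set c := ((univ : Finset (Fin m → ZMod 2)).filter fun v => blkres hrm v = 0).card with hc
  have h2 : 2^m = 2^r * c := by
    rw [← hcV, hsum]
    rw [Finset.sum_congr rfl (fun b _ => hconst b), Finset.sum_const, Finset.card_univ, hcI,
      smul_eq_mul]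
  have h3 : (2:ℕ)^r * 2^(m-r) = 2^m := by
    rw [← pow_add]
    congr 1
    omega
  have hcval : c = 2^(m-r) :=
    Nat.eq_of_mul_eq_mul_left (pow_pos (by norm_num : (0:ℕ) < 2) r) (by rw [← h2, h3])
  rw [hconst a]
  exact hcval

lemma fiber_disjoint (hrm : r ≤ m) {a b : Fin r → ZMod 2} (hab : a ≠ b) :
    Disjoint ((univ : Finset (Fin m → ZMod 2)).filter fun v => blkres hrm v = a)
      ((univ : Finset (Fin m → ZMod 2)).filter fun v => blkres hrm v = b) := by
  rw [Finset.disjoint_left]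
  intro v hva hvb
  rw [Finset.mem_filter] at hva hvb
  apply hab
  rw [← hva.2, ← hvb.2]

lemma biUnion_fiber (hrm : r ≤ m) (T : Finset (Fin r → ZMod 2)) :
    T.biUnion (fun a => (univ : Finset (Fin m → ZMod 2)).filter fun v => blkres hrm v = a)
      = (univ : Finset (Fin m → ZMod 2)).filter fun v => blkres hrm v ∈ T := by
  ext v
  simp only [Finset.mem_biUnion, Finset.mem_filter, Finset.mem_univ, true_and]
  constructor
  · rintro ⟨a, ha, rfl⟩
    exact ha
  · intro h
    exact ⟨blkres hrm v, h, rfl⟩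

lemma card_biUnion_fiber (hrm : r ≤ m) (T : Finset (Fin r → ZMod 2)) :
    (T.biUnion (fun a => (univ : Finset (Fin m → ZMod 2)).filter
      fun v => blkres hrm v = a)).card = T.card * 2^(m-r) := by
  rw [Finset.card_biUnion (fun a _ b _ hab => fiber_disjoint hrm hab)]
  rw [Finset.sum_congr rfl (fun a _ => card_fiber hrm a), Finset.sum_const, smul_eq_mul]

lemma compl_biUnion_fiber (hrm : r ≤ m) (T : Finset (Fin r → ZMod 2)) :
    (univ : Finset (Fin m → ZMod 2)) \ (T.biUnion (fun a =>
        (univ : Finset (Fin m → ZMod 2)).filter fun v => blkres hrm v = a))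
      = ((univ : Finset (Fin r → ZMod 2)) \ T).biUnion (fun a =>
        (univ : Finset (Fin m → ZMod 2)).filter fun v => blkres hrm v = a) := by
  rw [biUnion_fiber, biUnion_fiber]
  ext v
  simp only [Finset.mem_sdiff, Finset.mem_filter, Finset.mem_univ, true_and]

lemma card_inter_biUnion (hrm : r ≤ m) (S : Finset (Fin m → ZMod 2))
    (T : Finset (Fin r → ZMod 2)) :
    (S ∩ T.biUnion (fun a => (univ : Finset (Fin m → ZMod 2)).filter
        fun v => blkres hrm v = a)).card
      = ∑ a ∈ T, (S ∩ ((univ : Finset (Fin m → ZMod 2)).filter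
        fun v => blkres hrm v = a)).card := by
  rw [Finset.inter_biUnion]
  rw [Finset.card_biUnion]
  intro a ha b hb hab
  exact Finset.disjoint_of_subset_left Finset.inter_subset_right
    (Finset.disjoint_of_subset_right Finset.inter_subset_right (fiber_disjoint hrm hab))

end Blocks
lemma G_bound {V : Type*} [Fintype V] [DecidableEq V] (ε : ℝ) (hε0 : 0 < ε) (hε : ε < 1/2)
    (w : ℕ) (A : Finset V)
    (h2j : 2 * A.card ≤ Fintype.card V)
    (hw1 : ε * Fintype.card V ≤ w) (hw2 : (w:ℝ) ≤ (1-ε)*Fintype.card V)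
    (hn : 0 < Fintype.card V) :
    |∑ S ∈ powersetCard w (univ : Finset V), (-1:ℝ)^(S ∩ A).card|
      ≤ ((Fintype.card V : ℝ)+1) * (Fintype.card V).choose w * (1 - 2*ε*(1-ε))^A.card := by
  rw [G_sum_eq]
  exact kraw_ratio (Fintype.card V) w A.card ε hε0 hε h2j hw1 hw2 hn

lemma core_bound (m r : ℕ) (hrm : r ≤ m) (ε : ℝ) (hε0 : 0 < ε) (hε : ε < 1/2)
    (w : ℕ) (hw1 : ε * 2^m ≤ w) (hw2 : (w:ℝ) ≤ (1-ε) * 2^m) :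
    (((powersetCard w (univ : Finset (Fin m → ZMod 2))).filter
        fun S => ∀ a : Fin r → ZMod 2, Even ((S ∩ ((univ : Finset (Fin m → ZMod 2)).filter
          fun v => blkres hrm v = a)).card)).card : ℝ) * 2^(2^r)
      ≤ ((2:ℝ)^m+1) * (((2^m).choose w : ℕ) : ℝ)
          * (2 * (1 + (1 - 2*ε*(1-ε))^(2^(m-r)))^(2^r)) := by
  classical
  set c₀ : ℝ := 1 - 2*ε*(1-ε) with hc₀
  have hc₀0 : 0 ≤ c₀ := by nlinarith
  have hc₀1 : c₀ ≤ 1 := by nlinarith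
  have hcV : Fintype.card (Fin m → ZMod 2) = 2^m := by simp [ZMod.card]
  have hcI : Fintype.card (Fin r → ZMod 2) = 2^r := by simp [ZMod.card]
  have hℓb : 2^r * 2^(m-r) = 2^m := by
    rw [← pow_add]; congr 1; omega
  set B : (Fin r → ZMod 2) → Finset (Fin m → ZMod 2) :=
    fun a => (univ : Finset (Fin m → ZMod 2)).filter fun v => blkres hrm v = a with hB
  set Pw := powersetCard w (univ : Finset (Fin m → ZMod 2)) with hPw
  set GT : Finset (Fin r → ZMod 2) → ℝ :=
    fun T => ∑ S ∈ Pw, (-1:ℝ)^((S ∩ T.biUnion B).card) with hGT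
  set Mc : ℝ := ((2:ℝ)^m+1) * (((2^m).choose w : ℕ) : ℝ) with hMc
  have hMc0 : 0 ≤ Mc := by positivity
  -- Step 1 : per-S identity
  have hprod : ∀ S ∈ Pw, (∑ T ∈ (univ : Finset (Fin r → ZMod 2)).powerset,
      (-1:ℝ)^((S ∩ T.biUnion B).card))
      = if (∀ a, Even ((S ∩ B a).card)) then (2:ℝ)^(2^r) else 0 := by
    intro S _
    have h1 : ∀ T ∈ (univ : Finset (Fin r → ZMod 2)).powerset,
        (-1:ℝ)^((S ∩ T.biUnion B).card) = ∏ a ∈ T, (-1:ℝ)^((S ∩ B a).card) := by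
      intro T _
      rw [card_inter_biUnion hrm S T, ← Finset.prod_pow_eq_pow_sum]
    rw [Finset.sum_congr rfl h1]
    have h2 := Finset.prod_add (fun a => (-1:ℝ)^((S ∩ B a).card)) (fun _ => (1:ℝ))
      (univ : Finset (Fin r → ZMod 2))
    simp only [Finset.prod_const_one, mul_one] at h2
    rw [← h2]
    by_cases hall : ∀ a : Fin r → ZMod 2, Even ((S ∩ B a).card)
    · rw [if_pos hall]
      have heq : ∀ a ∈ (univ : Finset (Fin r → ZMod 2)),
          (-1:ℝ)^((S ∩ B a).card) + 1 = 2 := by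
        intro a _
        rw [Even.neg_one_pow (hall a)]; norm_num
      rw [Finset.prod_congr rfl heq, Finset.prod_const, Finset.card_univ, hcI]
    · rw [if_neg hall]
      push_neg at hall
      obtain ⟨a, ha⟩ := hall
      apply Finset.prod_eq_zero (Finset.mem_univ a)
      rw [Odd.neg_one_pow (Nat.odd_iff.2 (Nat.not_even_iff.1 ha))]
      norm_num
  -- Step 2 : count * 2^ℓ = ∑_T GT T
  have hkey : ((Pw.filter fun S => ∀ a, Even ((S ∩ B a).card)).card : ℝ) * 2^(2^r)
      = ∑ T ∈ (univ : Finset (Fin r → ZMod 2)).powerset, GT T := by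
    rw [hGT]
    rw [Finset.sum_comm]
    rw [Finset.sum_congr rfl hprod]
    rw [Finset.sum_ite, Finset.sum_const_zero, add_zero, Finset.sum_const, nsmul_eq_mul]
  -- Step 3 : per-T bound
  have hGTb : ∀ T ∈ (univ : Finset (Fin r → ZMod 2)).powerset,
      |GT T| ≤ Mc * c₀^(min T.card (2^r - T.card) * 2^(m-r)) := by
    intro T hT
    have htc : T.card ≤ 2^r := by
      have := Finset.card_le_card (Finset.mem_powerset.1 hT)
      rwa [Finset.card_univ, hcI] at this
    have hAcard : (T.biUnion B).card = T.card * 2^(m-r) := card_biUnion_fiber hrm T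
    have hw1' : ε * Fintype.card (Fin m → ZMod 2) ≤ w := by
      rw [hcV]; push_cast; exact_mod_cast hw1
    have hw2' : (w:ℝ) ≤ (1-ε) * Fintype.card (Fin m → ZMod 2) := by
      rw [hcV]; push_cast; exact_mod_cast hw2
    have hnV : 0 < Fintype.card (Fin m → ZMod 2) := by rw [hcV]; positivity
    have hMcast : ((Fintype.card (Fin m → ZMod 2) : ℝ)+1)
        * ((Fintype.card (Fin m → ZMod 2)).choose w : ℝ) = Mc := by
      rw [hcV, hMc]; push_cast; ring
    by_cases hcase : 2 * (T.card * 2^(m-r)) ≤ 2^m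
    · have hb := G_bound ε hε0 hε w (T.biUnion B)
        (by rw [hAcard, hcV]; exact hcase) hw1' hw2' hnV
      rw [hMcast, hAcard] at hb
      refine hb.trans ?_
      apply mul_le_mul_of_nonneg_left _ hMc0
      apply pow_le_pow_of_le_one hc₀0 hc₀1
      exact Nat.mul_le_mul_right _ (min_le_left _ _)
    · have hGc := G_compl (T.biUnion B) w
      rw [compl_biUnion_fiber hrm T] at hGc
      have hA'card : (((univ : Finset (Fin r → ZMod 2)) \ T).biUnion B).card
          = (2^r - T.card) * 2^(m-r) := by
        rw [card_biUnion_fiber hrm, Finset.card_sdiff_of_subset (Finset.subset_univ T),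
          Finset.card_univ, hcI]
      have hsum2 : (2^r - T.card) * 2^(m-r) + T.card * 2^(m-r) = 2^m := by
        rw [← Nat.add_mul, Nat.sub_add_cancel htc, hℓb]
      have h2j' : 2 * (((univ : Finset (Fin r → ZMod 2)) \ T).biUnion B).card
          ≤ Fintype.card (Fin m → ZMod 2) := by
        rw [hA'card, hcV]
        omega
      have hb := G_bound ε hε0 hε w (((univ : Finset (Fin r → ZMod 2)) \ T).biUnion B)
        h2j' hw1' hw2' hnV
      rw [hMcast, hA'card] at hb
      have habs : |GT T| = |∑ S ∈ Pw,
          (-1:ℝ)^((S ∩ ((univ : Finset (Fin r → ZMod 2)) \ T).biUnion B).card)| := by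
        rw [hGT]
        simp only
        rw [hGc, abs_mul, abs_pow, abs_neg, abs_one, one_pow, one_mul]
      rw [habs]
      refine hb.trans ?_
      apply mul_le_mul_of_nonneg_left _ hMc0
      apply pow_le_pow_of_le_one hc₀0 hc₀1
      exact Nat.mul_le_mul_right _ (min_le_right _ _)
  -- Step 4 : sum the bounds
  have hminb : ∀ T ∈ (univ : Finset (Fin r → ZMod 2)).powerset,
      Mc * c₀^(min T.card (2^r - T.card) * 2^(m-r))
        ≤ Mc * (c₀^(T.card * 2^(m-r)) + c₀^((2^r - T.card) * 2^(m-r))) := by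
    intro T _
    apply mul_le_mul_of_nonneg_left _ hMc0
    rcases min_cases T.card (2^r - T.card) with ⟨h, _⟩ | ⟨h, _⟩
    · rw [h]
      nlinarith [pow_nonneg hc₀0 ((2^r - T.card) * 2^(m-r))]
    · rw [h]
      nlinarith [pow_nonneg hc₀0 (T.card * 2^(m-r))]
  have hS1 : ∑ T ∈ (univ : Finset (Fin r → ZMod 2)).powerset, c₀^(T.card * 2^(m-r))
      = (1 + c₀^(2^(m-r)))^(2^r) := by
    rw [Finset.sum_powerset]
    have hinner : ∀ j ∈ range ((univ : Finset (Fin r → ZMod 2)).card + 1),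
        ∑ T ∈ powersetCard j (univ : Finset (Fin r → ZMod 2)), c₀^(T.card * 2^(m-r))
          = ((2^r).choose j : ℝ) * (c₀^(2^(m-r)))^j := by
      intro j _
      have : ∀ T ∈ powersetCard j (univ : Finset (Fin r → ZMod 2)),
          c₀^(T.card * 2^(m-r)) = (c₀^(2^(m-r)))^j := by
        intro T hT
        rw [(Finset.mem_powersetCard.1 hT).2, mul_comm, pow_mul]
      rw [Finset.sum_congr rfl this, Finset.sum_const, Finset.card_powersetCard,
        Finset.card_univ, hcI, nsmul_eq_mul]
    rw [Finset.sum_congr rfl hinner, Finset.card_univ, hcI]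
    rw [add_comm (1:ℝ), add_pow]
    apply Finset.sum_congr rfl
    intro k _
    simp [mul_comm]
  have hS2 : ∑ T ∈ (univ : Finset (Fin r → ZMod 2)).powerset, c₀^((2^r - T.card) * 2^(m-r))
      = (1 + c₀^(2^(m-r)))^(2^r) := by
    rw [Finset.sum_powerset]
    have hinner : ∀ j ∈ range ((univ : Finset (Fin r → ZMod 2)).card + 1),
        ∑ T ∈ powersetCard j (univ : Finset (Fin r → ZMod 2)), c₀^((2^r - T.card) * 2^(m-r))
          = ((2^r).choose j : ℝ) * (c₀^(2^(m-r)))^(2^r - j) := by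
      intro j _
      have : ∀ T ∈ powersetCard j (univ : Finset (Fin r → ZMod 2)),
          c₀^((2^r - T.card) * 2^(m-r)) = (c₀^(2^(m-r)))^(2^r - j) := by
        intro T hT
        rw [(Finset.mem_powersetCard.1 hT).2, mul_comm, pow_mul]
      rw [Finset.sum_congr rfl this, Finset.sum_const, Finset.card_powersetCard,
        Finset.card_univ, hcI, nsmul_eq_mul]
    rw [Finset.sum_congr rfl hinner, Finset.card_univ, hcI]
    rw [add_pow]
    apply Finset.sum_congr rfl
    intro k _
    simp [mul_comm]
  calc ((Pw.filter fun S => ∀ a, Even ((S ∩ B a).card)).card : ℝ) * 2^(2^r)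
      = ∑ T ∈ (univ : Finset (Fin r → ZMod 2)).powerset, GT T := hkey
    _ ≤ ∑ T ∈ (univ : Finset (Fin r → ZMod 2)).powerset, |GT T| :=
        Finset.sum_le_sum (fun T _ => le_abs_self _)
    _ ≤ ∑ T ∈ (univ : Finset (Fin r → ZMod 2)).powerset,
          Mc * (c₀^(T.card * 2^(m-r)) + c₀^((2^r - T.card) * 2^(m-r))) :=
        Finset.sum_le_sum (fun T hT => (hGTb T hT).trans (hminb T hT))
    _ = Mc * (2 * (1 + c₀^(2^(m-r)))^(2^r)) := by
        rw [← Finset.mul_sum, Finset.sum_add_distrib, hS1, hS2]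
        ring
lemma pow4_le_two_pow : ∀ t : ℕ, 16 ≤ t → t^4 ≤ 2^t := by
  intro t ht
  induction t, ht using Nat.le_induction with
  | base => norm_num
  | succ t ht ih =>
    have a3 : 16*t^3 ≤ t^4 := by
      calc 16*t^3 ≤ t*t^3 := Nat.mul_le_mul_right _ ht
        _ = t^4 := by ring
    have a2 : 16*t^2 ≤ t^3 := by
      calc 16*t^2 ≤ t*t^2 := Nat.mul_le_mul_right _ ht
        _ = t^3 := by ring
    have a1 : 16*t ≤ t^2 := by
      calc 16*t ≤ t*t := Nat.mul_le_mul_right _ ht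
        _ = t^2 := by ring
    have h1 : (t+1)^4 ≤ 2 * t^4 := by nlinarith [a3, a2, a1, ht]
    calc (t+1)^4 ≤ 2 * t^4 := h1
      _ ≤ 2 * 2^t := by omega
      _ = 2^(t+1) := by ring

lemma lt_two_pow_s4 (k : ℕ) : k < 2^(Nat.sqrt (Nat.sqrt k) + 16) := by
  have h1 : k < (Nat.sqrt k + 1)^2 := by
    simpa [Nat.succ_eq_add_one] using Nat.lt_succ_sqrt' k
  have h2 : Nat.sqrt k < (Nat.sqrt (Nat.sqrt k) + 1)^2 := by
    simpa [Nat.succ_eq_add_one] using Nat.lt_succ_sqrt' (Nat.sqrt k)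
  set s := Nat.sqrt (Nat.sqrt k) with hs
  calc k < (Nat.sqrt k + 1)^2 := h1
    _ ≤ ((s+1)^2)^2 := Nat.pow_le_pow_left (by omega) 2
    _ = (s+1)^4 := by ring
    _ ≤ (s+16)^4 := Nat.pow_le_pow_left (by omega) 4
    _ ≤ 2^(s+16) := pow4_le_two_pow _ (by omega)

lemma log_le_s4 (n : ℕ) : Nat.log 2 n ≤ Nat.sqrt (Nat.sqrt n) + 15 := by
  rcases Nat.eq_zero_or_pos n with h | h
  · simp [h]
  · have hne : n ≠ 0 := by omega
    have := Nat.log_lt_of_lt_pow hne (lt_two_pow_s4 n)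
    omega

lemma four_pow_le (x y : ℕ) (h : x^4 ≤ y^4) : x ≤ y := by
  by_contra hc
  push_neg at hc
  have := Nat.pow_lt_pow_left hc (n := 4) (by norm_num)
  omega

lemma add16_pow4 (u : ℕ) : (u+16)^4 ≤ 16*(u^4 + 65536) := by
  rcases le_total u 16 with h | h
  · have h1 : (u+16)^4 ≤ 32^4 := Nat.pow_le_pow_left (by omega) 4
    have h2 : (32:ℕ)^4 = 16*65536 := by norm_num
    linarith [Nat.zero_le (u^4)]
  · have h1 : (u+16)^4 ≤ (2*u)^4 := Nat.pow_le_pow_left (by omega) 4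
    have h2 : (2*u)^4 = 16*u^4 := by ring
    omega

lemma master_nat (a cC : ℕ) :
    ∀ᶠ m : ℕ in Filter.atTop,
      (Nat.sqrt (Nat.sqrt (m+1)) + 16) * (Nat.sqrt (Nat.sqrt (a*(m+2))) + 16) + cC < m := by
  rw [Filter.eventually_atTop]
  set c₁ : ℕ := 1048608 with hc₁
  set c₂ : ℕ := 48*a + 1048576 with hc₂
  refine ⟨4*c₁*c₂ + 4*cC + 8, fun m hm => ?_⟩
  set u := Nat.sqrt (Nat.sqrt (m+1)) with hu
  set v := Nat.sqrt (Nat.sqrt (a*(m+2))) with hv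
  have hm1 : 1 ≤ m := by
    have : 0 < c₁ * c₂ := by positivity
    omega
  have hu4' : u^4 ≤ m+1 := by
    have h1 : u^2 ≤ Nat.sqrt (m+1) := Nat.sqrt_le' _
    have h2 : (Nat.sqrt (m+1))^2 ≤ m+1 := Nat.sqrt_le' _
    calc u^4 = (u^2)^2 := by ring
      _ ≤ (Nat.sqrt (m+1))^2 := Nat.pow_le_pow_left h1 2
      _ ≤ m+1 := h2
  have hv4' : v^4 ≤ a*(m+2) := by
    have h1 : v^2 ≤ Nat.sqrt (a*(m+2)) := Nat.sqrt_le' _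
    have h2 : (Nat.sqrt (a*(m+2)))^2 ≤ a*(m+2) := Nat.sqrt_le' _
    calc v^4 = (v^2)^2 := by ring
      _ ≤ (Nat.sqrt (a*(m+2)))^2 := Nat.pow_le_pow_left h1 2
      _ ≤ a*(m+2) := h2
  have hu4 : (u+16)^4 ≤ c₁ * m := by
    have h8 := add16_pow4 u
    have h9 : 16*(u^4 + 65536) ≤ 16*(m+1) + 1048576 := by linarith
    have hfin : 16*(m+1) + 1048576 ≤ c₁ * m := by
      rw [hc₁]
      nlinarith
    omega
  have hv4 : (v+16)^4 ≤ c₂ * m := by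
    have h8 := add16_pow4 v
    have h9 : 16*(v^4 + 65536) ≤ 16*a*m + 32*a + 1048576 := by nlinarith [hv4']
    have hfin : 16*a*m + 32*a + 1048576 ≤ c₂ * m := by
      rw [hc₂]
      nlinarith
    omega
  set p := m - cC - 1 with hp
  have hmp : m = p + cC + 1 := by omega
  have hm2p : m ≤ 2*p := by
    have : 0 < c₁ * c₂ := by positivity
    omega
  have hpbig : 2*c₁*c₂ + 2 ≤ p := by
    have e : 4*c₁*c₂ = 2*(2*c₁*c₂) := by ring
    clear_value c₁ c₂ p; omega
  have hgoal4 : ((u+16)*(v+16))^4 ≤ p^4 := by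
    have e1 : ((u+16)*(v+16))^4 = (u+16)^4 * (v+16)^4 := by ring
    have e2 : (u+16)^4 * (v+16)^4 ≤ (c₁*m) * (c₂*m) := Nat.mul_le_mul hu4 hv4
    have e3 : (c₁*m)*(c₂*m) = c₁*c₂*m^2 := by ring
    have e4 : c₁*c₂*m^2 ≤ c₁*c₂*(2*p)^2 := Nat.mul_le_mul_left _ (Nat.pow_le_pow_left hm2p 2)
    have e5 : c₁*c₂*(2*p)^2 = 4*c₁*c₂*p^2 := by ring
    have e6 : 4*c₁*c₂*p^2 ≤ p^2*p^2 := by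
      apply Nat.mul_le_mul_right
      nlinarith
    have e7 : p^2*p^2 = p^4 := by ring
    omega
  have hfin := four_pow_le _ _ hgoal4
  omega

lemma master_core (Cc : ℝ) (hC : 0 < Cc) (cC : ℕ) (hcC : (1:ℝ) ≤ Cc * 2^cC)
    (m U V Λ : ℕ) (hmU : m+1 ≤ 2^U) (hΛ : Λ+1 ≤ V) (hm : U*V + cC < m) :
    ((m:ℝ)+1)^(Λ+1) < Cc * 2^m := by
  have h1 : ((m:ℝ)+1)^(Λ+1) ≤ ((2:ℝ)^U)^(Λ+1) := by
    apply pow_le_pow_left₀ (by positivity)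
    calc ((m:ℝ)+1) = ((m+1 : ℕ) : ℝ) := by push_cast; ring
      _ ≤ ((2^U : ℕ) : ℝ) := by exact_mod_cast hmU
      _ = (2:ℝ)^U := by push_cast; ring
  have h2 : ((2:ℝ)^U)^(Λ+1) = (2:ℝ)^(U*(Λ+1)) := by rw [← pow_mul]
  have h3 : U*(Λ+1) ≤ U*V := Nat.mul_le_mul_left _ hΛ
  have h5 : ((m:ℝ)+1)^(Λ+1) ≤ (2:ℝ)^(U*V) := by
    rw [h2] at h1
    refine h1.trans ?_
    exact pow_le_pow_right₀ (by norm_num) h3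
  have hlt : (2:ℝ)^(U*V) < 2^(m - cC) := by
    have hnat : (2:ℕ)^(U*V) < 2^(m - cC) :=
      Nat.pow_lt_pow_right (by norm_num) (by omega)
    calc (2:ℝ)^(U*V) = ((2^(U*V) : ℕ) : ℝ) := by push_cast; ring
      _ < ((2^(m-cC) : ℕ) : ℝ) := by exact_mod_cast hnat
      _ = (2:ℝ)^(m-cC) := by push_cast; ring
  have hsplit : (2:ℝ)^m = 2^(m - cC) * 2^cC := by
    rw [← pow_add]
    congr 1
    omega
  have h6 : (2:ℝ)^(U*V) < Cc * 2^m := by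
    calc (2:ℝ)^(U*V) < 2^(m-cC) := hlt
      _ = 1 * 2^(m-cC) := (one_mul _).symm
      _ ≤ (Cc * 2^cC) * 2^(m-cC) := mul_le_mul_of_nonneg_right hcC (by positivity)
      _ = Cc * 2^m := by rw [hsplit]; ring
  exact h5.trans_lt h6

lemma master (a : ℕ) (Cc : ℝ) (hC : 0 < Cc) :
    ∀ᶠ m : ℕ in Filter.atTop, ((m:ℝ)+1)^(Nat.log 2 (a*(m+2))+1) < Cc * 2^m := by
  obtain ⟨cC, hcC⟩ := pow_unbounded_of_one_lt (1/Cc) (one_lt_two (α := ℝ))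
  have hcC' : (1:ℝ) ≤ Cc * 2^cC := by
    rw [div_lt_iff₀ hC] at hcC
    nlinarith [pow_pos (two_pos (α := ℝ)) cC]
  filter_upwards [master_nat a cC] with m hm
  exact master_core Cc hC cC hcC' m _ _ _ (lt_two_pow_s4 (m+1)).le
    (by have := log_le_s4 (a*(m+2)); omega) hm
/-- Let `0 < R < 1`, `0 < ε < 1/2`, `0 < δ < 1/2`. Then there is `m₀` such
that for all `m ≥ m₀`, with `n = 2^m` and `r` the least nonnegative integer with
`∑_{i=0}^{r} C(m,i) ≥ R n` (so `r ≤ m`), and with blocks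
`B_a = {v : Fin m → F₂ | ∀ i : Fin r, v i = a i}` for `a : Fin r → F₂`, the number of
`w`-element subsets `S` of `Fin m → F₂` with `|S ∩ B_a|` even for every `a` is at most
`(1/2 + δ)^(2^r) C(n, w)`, for every `w` with `εn ≤ w ≤ (1-ε)n`. -/
theorem rm_block_even_intersection_bound (R ε δ : ℝ)
    (hR0 : 0 < R) (hR1 : R < 1)
    (hε0 : 0 < ε) (hε : ε < 1 / 2) (hδ0 : 0 < δ) (hδ : δ < 1 / 2) :
    ∃ m₀ : ℕ, ∀ m : ℕ, m₀ ≤ m → ∀ (r : ℕ) (hrm : r ≤ m),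
      IsLeast {k : ℕ | R * 2 ^ m ≤ ∑ i ∈ Finset.range (k + 1), (m.choose i : ℝ)} r →
      ∀ w : ℕ, ε * 2 ^ m ≤ w → (w : ℝ) ≤ (1 - ε) * 2 ^ m →
      (((Finset.powersetCard w (Finset.univ : Finset (Fin m → ZMod 2))).filter
          fun S => ∀ a : Fin r → ZMod 2,
            Even ((S ∩ (Finset.univ.filter
              fun v : Fin m → ZMod 2 => ∀ i : Fin r, v (Fin.castLE hrm i) = a i)).card)).card : ℝ)
        ≤ (1 / 2 + δ) ^ (2 ^ r) * ((2 ^ m).choose w) := by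
  classical
  set c₀ : ℝ := 1 - 2*ε*(1-ε) with hc₀
  have hc₀1 : c₀ < 1 := by nlinarith
  have hc₀0 : 0 ≤ c₀ := by nlinarith
  obtain ⟨K₀, hK₀⟩ := exists_pow_lt_of_lt_one hδ0 hc₀1
  set q : ℝ := (1+2*δ)/(1+δ) with hq
  have hq1 : 1 < q := by
    rw [hq, lt_div_iff₀ (by linarith)]
    linarith
  obtain ⟨d, hd⟩ := pow_unbounded_of_one_lt (2:ℝ) hq1
  have hEA := master (2^K₀) (1-R) (by linarith)
  have hEB := master d R hR0
  have hbig := (hEA.and (hEB.and (Filter.eventually_ge_atTop (K₀+1))))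
  rw [Filter.eventually_atTop] at hbig
  obtain ⟨m₀, hm₀⟩ := hbig
  refine ⟨m₀, fun m hm r hrm hL w hw1 hw2 => ?_⟩
  obtain ⟨hEAm, hEBm, hmK₀⟩ := hm₀ m hm
  -- Step 1 : r ≤ m - K₀
  have hrK : r ≤ m - K₀ := by
    apply hL.2
    show R * 2 ^ m ≤ ∑ i ∈ Finset.range (m - K₀ + 1), (m.choose i : ℝ)
    -- tail bound
    have htail : ∑ i ∈ Finset.Ico (m - K₀ + 1) (m+1), m.choose i ≤ K₀ * (m+1)^K₀ := by
      have hterm : ∀ i ∈ Finset.Ico (m - K₀ + 1) (m+1), m.choose i ≤ (m+1)^K₀ := by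
        intro i hi
        rw [Finset.mem_Ico] at hi
        have him : i ≤ m := by omega
        have h1 : m.choose i = m.choose (m - i) := (Nat.choose_symm him).symm
        have h2 : m.choose (m - i) ≤ m^(m-i) := Nat.choose_le_pow m (m-i)
        have h3 : m^(m-i) ≤ (m+1)^(m-i) := Nat.pow_le_pow_left (by omega) _
        have h4 : (m+1)^(m-i) ≤ (m+1)^K₀ := Nat.pow_le_pow_right (by omega) (by omega)
        omega
      calc ∑ i ∈ Finset.Ico (m - K₀ + 1) (m+1), m.choose i
          ≤ ∑ i ∈ Finset.Ico (m - K₀ + 1) (m+1), (m+1)^K₀ := Finset.sum_le_sum hterm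
        _ = (Finset.Ico (m - K₀ + 1) (m+1)).card * (m+1)^K₀ := by
            rw [Finset.sum_const, smul_eq_mul]
        _ ≤ K₀ * (m+1)^K₀ := by
            rw [Nat.card_Ico]
            apply Nat.mul_le_mul_right
            omega
    have hsplit : ∑ i ∈ Finset.range (m - K₀ + 1), m.choose i
        + ∑ i ∈ Finset.Ico (m - K₀ + 1) (m+1), m.choose i = 2^m := by
      rw [Finset.range_eq_Ico, Finset.sum_Ico_consecutive _ (by omega) (by omega),
        ← Finset.range_eq_Ico, Nat.sum_range_choose]
    -- real tail bound via hEAm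
    have hK₀m : K₀ ≤ Nat.log 2 (2^K₀*(m+2)) := by
      have h1 : (2:ℕ)^K₀ * 2 ≤ 2^K₀ * (m+2) := Nat.mul_le_mul_left _ (by omega)
      have h2 : Nat.log 2 (2^K₀*2) = K₀ + 1 := by
        rw [← pow_succ]
        exact Nat.log_pow (by norm_num) _
      have := Nat.log_mono_right (b := 2) h1
      omega
    have hreal : (K₀:ℝ) * (m+1)^K₀ < (1-R) * 2^m := by
      have h1 : (K₀:ℝ) * (m+1)^K₀ ≤ ((m:ℝ)+1)^(K₀+1) := by
        rw [pow_succ]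
        rw [mul_comm ((( m:ℝ)+1)^K₀) _]
        apply mul_le_mul_of_nonneg_right _ (by positivity)
        have : (K₀:ℝ) ≤ (m:ℝ)+1 := by
          have : K₀ ≤ m + 1 := by omega
          exact_mod_cast this
        exact this
      have h2 : ((m:ℝ)+1)^(K₀+1) ≤ ((m:ℝ)+1)^(Nat.log 2 (2^K₀*(m+2))+1) := by
        apply pow_le_pow_right₀ (by push_cast; linarith [Nat.cast_nonneg (α := ℝ) m])
        omega
      linarith [hEAm]
    have hcast : (∑ i ∈ Finset.range (m - K₀ + 1), (m.choose i : ℝ))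
        = ((∑ i ∈ Finset.range (m - K₀ + 1), m.choose i : ℕ) : ℝ) := by push_cast; ring
    rw [hcast]
    have htr : ((∑ i ∈ Finset.range (m - K₀ + 1), m.choose i : ℕ) : ℝ)
        ≥ 2^m - (K₀:ℝ)*(m+1)^K₀ := by
      have h1 : ((2:ℝ))^m = ((2^m : ℕ) : ℝ) := by push_cast; ring
      have h2 : ((∑ i ∈ Finset.Ico (m - K₀ + 1) (m+1), m.choose i : ℕ) : ℝ) ≤ (K₀:ℝ)*(m+1)^K₀ := by
        calc ((∑ i ∈ Finset.Ico (m - K₀ + 1) (m+1), m.choose i : ℕ) : ℝ)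
            ≤ ((K₀ * (m+1)^K₀ : ℕ) : ℝ) := by exact_mod_cast htail
          _ = (K₀:ℝ)*(m+1)^K₀ := by push_cast; ring
      have h3 : ((∑ i ∈ Finset.range (m - K₀ + 1), m.choose i : ℕ) : ℝ)
          + ((∑ i ∈ Finset.Ico (m - K₀ + 1) (m+1), m.choose i : ℕ) : ℝ) = (2:ℝ)^m := by
        rw [h1]
        exact_mod_cast congrArg (Nat.cast (R := ℝ)) hsplit
      linarith
    linarith
  -- Step 2 : d*(m+2) ≤ 2^r
  have h2r : d*(m+2) ≤ 2^r := by
    by_contra hcon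
    push_neg at hcon
    have hrΛ : r ≤ Nat.log 2 (d*(m+2)) := by
      have h1 : (2:ℕ)^r ≤ d*(m+2) := by omega
      have := Nat.log_mono_right (b := 2) h1
      rwa [Nat.log_pow (by norm_num)] at this
    have hsum : ∑ i ∈ Finset.range (r+1), m.choose i ≤ (m+1)^(r+1) := by
      have hterm : ∀ i ∈ Finset.range (r+1), m.choose i ≤ (m+1)^r := by
        intro i hi
        rw [Finset.mem_range] at hi
        calc m.choose i ≤ m^i := Nat.choose_le_pow m i
          _ ≤ (m+1)^i := Nat.pow_le_pow_left (by omega) _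
          _ ≤ (m+1)^r := Nat.pow_le_pow_right (by omega) (by omega)
      calc ∑ i ∈ Finset.range (r+1), m.choose i
          ≤ ∑ i ∈ Finset.range (r+1), (m+1)^r := Finset.sum_le_sum hterm
        _ = (r+1) * (m+1)^r := by rw [Finset.sum_const, Finset.card_range, smul_eq_mul]
        _ ≤ (m+1) * (m+1)^r := Nat.mul_le_mul_right _ (by omega)
        _ = (m+1)^(r+1) := by ring
    have hmono : (m+1)^(r+1) ≤ (m+1)^(Nat.log 2 (d*(m+2))+1) :=
      Nat.pow_le_pow_right (by omega) (by omega)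
    have hup : R * 2^m ≤ ((m:ℝ)+1)^(Nat.log 2 (d*(m+2))+1) := by
      calc R * 2^m ≤ ∑ i ∈ Finset.range (r+1), (m.choose i : ℝ) := hL.1
        _ = ((∑ i ∈ Finset.range (r+1), m.choose i : ℕ) : ℝ) := by push_cast; ring
        _ ≤ (((m+1)^(Nat.log 2 (d*(m+2))+1) : ℕ) : ℝ) := by
            exact_mod_cast le_trans hsum hmono
        _ = ((m:ℝ)+1)^(Nat.log 2 (d*(m+2))+1) := by push_cast; ring
    linarith [hEBm]
  -- Step 3 : c₀^(2^(m-r)) ≤ δ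
  have hcb : c₀^(2^(m-r)) ≤ δ := by
    have hmr : K₀ ≤ m - r := by omega
    have hb : K₀ ≤ 2^(m-r) := le_trans hmr (Nat.lt_two_pow_self (n := m-r)).le
    calc c₀^(2^(m-r)) ≤ c₀^K₀ := pow_le_pow_of_le_one hc₀0 hc₀1.le hb
      _ ≤ δ := hK₀.le
  -- Step 4 : conclude
  have hcore := core_bound m r hrm ε hε0 hε w hw1 hw2
  have hBeq : ∀ a : Fin r → ZMod 2,
      ((Finset.univ : Finset (Fin m → ZMod 2)).filter
        fun v => ∀ i : Fin r, v (Fin.castLE hrm i) = a i)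
      = ((Finset.univ : Finset (Fin m → ZMod 2)).filter fun v => blkres hrm v = a) := by
    intro a
    ext v
    simp [blkres, funext_iff]
  have hfeq : ((Finset.powersetCard w (Finset.univ : Finset (Fin m → ZMod 2))).filter
          fun S => ∀ a : Fin r → ZMod 2,
            Even ((S ∩ (Finset.univ.filter
              fun v : Fin m → ZMod 2 => ∀ i : Fin r, v (Fin.castLE hrm i) = a i)).card))
      = ((Finset.powersetCard w (Finset.univ : Finset (Fin m → ZMod 2))).filter
          fun S => ∀ a : Fin r → ZMod 2,
            Even ((S ∩ ((Finset.univ : Finset (Fin m → ZMod 2)).filter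
              fun v => blkres hrm v = a)).card)) := by
    apply Finset.filter_congr
    intro S _
    simp only [hBeq]
  rw [hfeq]
  have h2ℓ : (0:ℝ) < 2^(2^r) := by positivity
  apply le_of_mul_le_mul_right _ h2ℓ
  refine hcore.trans ?_
  -- remains : (2^m+1)*C*(2*(1+c₀^b)^ℓ) ≤ (1/2+δ)^ℓ * C * 2^ℓ
  have hC0 : (0:ℝ) ≤ ((2^m).choose w : ℝ) := by positivity
  have hqd : 2 * ((2:ℝ)^m + 1) ≤ q^(2^r) := by
    have h1 : ((2:ℝ))^(m+2) ≤ (q^d)^(m+2) :=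
      pow_le_pow_left₀ (by norm_num) hd.le (m+2)
    have h2 : ((q:ℝ)^d)^(m+2) = q^(d*(m+2)) := by rw [← pow_mul]
    have h3 : (q:ℝ)^(d*(m+2)) ≤ q^(2^r) := pow_le_pow_right₀ hq1.le h2r
    have h4 : (2:ℝ)^(m+2) = 4 * 2^m := by ring
    have h5 : (1:ℝ) ≤ 2^m := one_le_pow₀ (by norm_num)
    nlinarith
  have hpow : (1 + c₀^(2^(m-r)))^(2^r) ≤ (1+δ)^(2^r) := by
    apply pow_le_pow_left₀ (by positivity)
    linarith
  have hqmul : q * (1+δ) = 1 + 2*δ := by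
    rw [hq]
    field_simp
  have hfinal : ((2:ℝ)^m+1) * (2 * (1 + c₀^(2^(m-r)))^(2^r)) ≤ (1+2*δ)^(2^r) := by
    have e1 : (1+2*δ:ℝ)^(2^r) = q^(2^r) * (1+δ)^(2^r) := by
      rw [← mul_pow, hqmul]
    rw [e1]
    calc ((2:ℝ)^m+1) * (2 * (1 + c₀^(2^(m-r)))^(2^r))
        = (2 * ((2:ℝ)^m+1)) * (1 + c₀^(2^(m-r)))^(2^r) := by ring
      _ ≤ q^(2^r) * (1+δ)^(2^r) := by
          apply mul_le_mul hqd hpow (by positivity)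
          positivity
  calc ((2:ℝ)^m+1) * (((2^m).choose w : ℕ) : ℝ) * (2 * (1 + c₀^(2^(m-r)))^(2^r))
      = (((2^m).choose w : ℕ) : ℝ) * (((2:ℝ)^m+1) * (2 * (1 + c₀^(2^(m-r)))^(2^r))) := by
        ring
    _ ≤ (((2^m).choose w : ℕ) : ℝ) * (1+2*δ)^(2^r) :=
        mul_le_mul_of_nonneg_left hfinal hC0
    _ = (1/2+δ)^(2^r) * (((2^m).choose w : ℕ) : ℝ) * 2^(2^r) := by
        have : ((1:ℝ)/2+δ)^(2^r) * 2^(2^r) = (1+2*δ)^(2^r) := by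
          rw [← mul_pow]
          congr 1
          ring
        rw [← this]
        ring
end

section
/- Let m \ge 1 and let r be an integer with 0 \le r \le m - 1. Let f : (Fin m \to F_2) \to F_2 lie in the F_2-linear span of the monomial functions e_S(v) = \prod_{i \in S} v_i over subsets S with |S| \le r, and let g lie in the corresponding span over subsets S with |S| \le m - r - 1. Then \sum_{v \in (Fin m \to F_2)} f(v) \cdot g(v) = 0 in F_2. -/
private lemma zmod2_add_self : ∀ x : ZMod 2, x + x = 0 := by decide

private lemma zmod2_mul_self : ∀ x : ZMod 2, x * x = x := by decide

private lemma sum_prod_eq_zero {m : ℕ} (U : Finset (Fin m)) (hU : U.card < m) :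
    ∑ v : Fin m → ZMod 2, ∏ i ∈ U, v i = 0 := by
  obtain ⟨j, hj⟩ : ∃ j, j ∉ U := by
    by_contra h
    push_neg at h
    have : U = Finset.univ := Finset.eq_univ_iff_forall.2 h
    simp [this, Finset.card_univ] at hU
  refine Finset.sum_involution (fun v _ => Function.update v j (v j + 1)) ?_ ?_
    (fun v _ => Finset.mem_univ _) ?_
  · intro v _
    have hprod : ∏ i ∈ U, Function.update v j (v j + 1) i = ∏ i ∈ U, v i :=
      Finset.prod_congr rfl fun i hi =>
        Function.update_of_ne (by rintro rfl; exact hj hi) _ _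
    rw [hprod]; exact zmod2_add_self _
  · intro v _ _
    intro hv
    have := congrFun hv j
    simp [Function.update_self] at this
  · intro v _
    funext i
    by_cases hij : i = j
    · subst hij
      simp [Function.update_self]
      have : ∀ x : ZMod 2, x + 1 + 1 = x := by decide
      exact this _
    · simp [Function.update_of_ne hij]

private lemma prod_mul_prod {m : ℕ} (v : Fin m → ZMod 2) (S T : Finset (Fin m)) :
    (∏ i ∈ S, v i) * ∏ i ∈ T, v i = ∏ i ∈ S ∪ T, v i := by
  have h1 : (∏ i ∈ S ∪ T, v i) * ∏ i ∈ S ∩ T, v i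
      = (∏ i ∈ S, v i) * ∏ i ∈ T, v i := Finset.prod_union_inter
  have h2 : ∏ i ∈ S ∪ T, v i
      = (∏ i ∈ (S ∪ T) \ (S ∩ T), v i) * ∏ i ∈ S ∩ T, v i :=
    (Finset.prod_sdiff Finset.inter_subset_union).symm
  calc (∏ i ∈ S, v i) * ∏ i ∈ T, v i
      = (∏ i ∈ S ∪ T, v i) * ∏ i ∈ S ∩ T, v i := h1.symm
    _ = ((∏ i ∈ S ∩ T, v i) * (∏ i ∈ S ∩ T, v i)) * ∏ i ∈ (S ∪ T) \ (S ∩ T), v i := by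
        rw [h2]; ring
    _ = (∏ i ∈ S ∩ T, v i) * ∏ i ∈ (S ∪ T) \ (S ∩ T), v i := by
        rw [zmod2_mul_self]
    _ = (∏ i ∈ (S ∪ T) \ (S ∩ T), v i) * ∏ i ∈ S ∩ T, v i := by ring
    _ = ∏ i ∈ S ∪ T, v i := h2.symm

/-- For `m ≥ 1` and `0 ≤ r ≤ m - 1`, if `f ∈ RM(r, m)` and
`g ∈ RM(m-r-1, m)` (spans of monomials of degree `≤ r`, resp. `≤ m-r-1`), then
`∑_v f(v) g(v) = 0` in `F₂`. -/
theorem rm_orthogonality (m r : ℕ) (hm : 1 ≤ m) (hr : r ≤ m - 1)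
    (f g : (Fin m → ZMod 2) → ZMod 2)
    (hf : f ∈ Submodule.span (ZMod 2)
      {h : (Fin m → ZMod 2) → ZMod 2 |
        ∃ S : Finset (Fin m), S.card ≤ r ∧ h = fun v => ∏ i ∈ S, v i})
    (hg : g ∈ Submodule.span (ZMod 2)
      {h : (Fin m → ZMod 2) → ZMod 2 |
        ∃ S : Finset (Fin m), S.card ≤ m - r - 1 ∧ h = fun v => ∏ i ∈ S, v i}) :
    ∑ v : Fin m → ZMod 2, f v * g v = 0 := by
  induction hf using Submodule.span_induction with
  | mem f hfm =>
    obtain ⟨S, hS, rfl⟩ := hfm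
    induction hg using Submodule.span_induction with
    | mem g hgm =>
      obtain ⟨T, hT, rfl⟩ := hgm
      have hcard : (S ∪ T).card < m := by
        have := Finset.card_union_le S T
        omega
      calc ∑ v : Fin m → ZMod 2, (∏ i ∈ S, v i) * ∏ i ∈ T, v i
          = ∑ v : Fin m → ZMod 2, ∏ i ∈ S ∪ T, v i :=
            Finset.sum_congr rfl fun v _ => prod_mul_prod v S T
        _ = 0 := sum_prod_eq_zero _ hcard
    | zero => simp
    | add g₁ g₂ _ _ ih1 ih2 =>
      simp only [Pi.add_apply, mul_add, Finset.sum_add_distrib, ih1, ih2, add_zero]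
    | smul c g₁ _ ih =>
      simp only [Pi.smul_apply, smul_eq_mul, mul_left_comm, ← Finset.mul_sum, ih, mul_zero]
  | zero => simp
  | add f₁ f₂ _ _ ih1 ih2 =>
    simp only [Pi.add_apply, add_mul, Finset.sum_add_distrib, ih1, ih2, add_zero]
  | smul c f₁ _ ih =>
    simp only [Pi.smul_apply, smul_eq_mul, mul_assoc, ← Finset.mul_sum, ih, mul_zero]
end
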